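/- arXiv:2104.10537 — 7 statements merged into one kernel-verified Lean document; each statement's English description precedes it below -/
import Mathlib

section
/- For any fixed time t₀ > 0, the union of all characteristic triangles with apex at time t₀ covers the strip below t₀: ⋃_{x ∈ [0,∞)} Δ(x,t₀) = {(x,t) : x ∈ [0,∞), 0 ≤ t ≤ t₀}. -/
open MeasureTheory Set Filter

noncomputable def Fpot (ρ0 u0 : ℝ → ℝ) (y x t : ℝ) : ℝ :=
  ∫ η in (0:ℝ)..y, (t * u0 η + η - x) * ρ0 η

noncomputable def Gpot (ρb ub : ℝ → ℝ) (τ x t : ℝ) : ℝ :=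
  ∫ η in (0:ℝ)..τ, (x - ub η * (t - η)) * (ρb η * ub η)

/-- `a` minimizes `f` over `[0, ∞)`. -/
def MinimizesOn (f : ℝ → ℝ) (a : ℝ) : Prop :=
  0 ≤ a ∧ ∀ b, 0 ≤ b → f a ≤ f b

/-- `a` is the smallest minimizer of `f` over `[0, ∞)`. -/
def SmallestMinimizer (f : ℝ → ℝ) (a : ℝ) : Prop :=
  MinimizesOn f a ∧ ∀ b, MinimizesOn f b → a ≤ b

/-- `a` is the largest minimizer of `f` over `[0, ∞)`. -/
def LargestMinimizer (f : ℝ → ℝ) (a : ℝ) : Prop :=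
  MinimizesOn f a ∧ ∀ b, MinimizesOn f b → b ≤ a

/-- `v` is the (attained) minimum value of `f` over `[0, ∞)`. -/
def IsMinValue (f : ℝ → ℝ) (v : ℝ) : Prop :=
  (∃ a, 0 ≤ a ∧ f a = v) ∧ ∀ b, 0 ≤ b → v ≤ f b

open Classical in
/-- The characteristic triangle with apex `(x, t)`. -/
noncomputable def charTriangle (Fm Gm ys yS τs τS : ℝ → ℝ → ℝ) (x t : ℝ) : Set (ℝ × ℝ) :=
  if x = 0 ∧ Fm x t < Gm x t then
    convexHull ℝ {((0:ℝ), t), ((0:ℝ), (0:ℝ)), (yS 0 t, (0:ℝ))}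
  else if Fm x t < Gm x t then
    convexHull ℝ {(x, t), (ys x t, (0:ℝ)), (yS x t, (0:ℝ))}
  else if Gm x t < Fm x t then
    convexHull ℝ {(x, t), ((0:ℝ), τs x t), ((0:ℝ), τS x t)}
  else
    convexHull ℝ {(x, t), (yS x t, (0:ℝ)), ((0:ℝ), τS x t), ((0:ℝ), (0:ℝ))}

open Topology

lemma intInt_of_bound {f : ℝ → ℝ} (hf : Measurable f) {a b C : ℝ} (hab : a ≤ b)
    (h : ∀ η ∈ Set.Icc a b, |f η| ≤ C) : IntervalIntegrable f volume a b := by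
  rw [intervalIntegrable_iff, uIoc_of_le hab]
  refine Integrable.mono' (g := fun _ => C) (integrableOn_const measure_Ioc_lt_top.ne)
    hf.aestronglyMeasurable.restrict ?_
  refine (ae_restrict_iff' measurableSet_Ioc).2 (ae_of_all _ fun η hη => ?_)
  simpa using h η ⟨le_of_lt hη.1, hη.2⟩

section FG
variable {ρ0 u0 ρb ub : ℝ → ℝ}

lemma FInt (hρ0meas : Measurable ρ0) (hu0meas : Measurable u0)
    (hρ0pos : ∀ η, 0 ≤ η → 0 < ρ0 η)
    (hρ0loc : ∀ K : ℝ, ∃ M : ℝ, ∀ η ∈ Set.Icc (0:ℝ) K, ρ0 η ≤ M)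
    {M : ℝ} (hM : ∀ η, 0 ≤ η → |u0 η| ≤ M) (hM0 : 0 ≤ M)
    (x t : ℝ) {l u : ℝ} (hl : 0 ≤ l) (hlu : l ≤ u) :
    IntervalIntegrable (fun η => (t * u0 η + η - x) * ρ0 η) volume l u := by
  obtain ⟨Mρ, hMρ⟩ := hρ0loc u
  have hmeas : Measurable fun η => (t * u0 η + η - x) * ρ0 η :=
    (((hu0meas.const_mul t).add measurable_id).sub measurable_const).mul hρ0meas
  refine intInt_of_bound hmeas hlu (C := (|t| * M + u + |x|) * max Mρ 0) fun η hη => ?_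
  have hη0 : 0 ≤ η := le_trans hl hη.1
  have hηu : η ≤ u := hη.2
  have hu0 : (0:ℝ) ≤ u := le_trans hη0 hηu
  have hA : |t * u0 η| ≤ |t| * M := by
    rw [abs_mul]
    exact mul_le_mul_of_nonneg_left (hM η hη0) (abs_nonneg t)
  rw [abs_mul]
  refine mul_le_mul ?_ ?_ (abs_nonneg _)
    (add_nonneg (add_nonneg (mul_nonneg (abs_nonneg t) hM0) hu0) (abs_nonneg x))
  · refine abs_le.2 ⟨?_, ?_⟩
    · have h1 := neg_abs_le (t * u0 η)
      have h2 := neg_abs_le x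
      have h3 := le_abs_self x
      linarith
    · have h1 := le_abs_self (t * u0 η)
      have h2 := neg_abs_le x
      linarith
  · rw [abs_of_pos (hρ0pos η hη0)]
    exact le_max_of_le_left (hMρ η ⟨hη0, hηu⟩)

lemma GInt (hρbmeas : Measurable ρb) (hubmeas : Measurable ub)
    (hρbpos : ∀ η, 0 ≤ η → 0 < ρb η)
    (hubpos : ∀ η, 0 ≤ η → 0 < ub η)
    (hρbloc : ∀ K : ℝ, ∃ M : ℝ, ∀ η ∈ Set.Icc (0:ℝ) K, ρb η ≤ M)
    {M : ℝ} (hM : ∀ η, 0 ≤ η → |ub η| ≤ M) (hM0 : 0 ≤ M)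
    (x t : ℝ) {l u : ℝ} (hl : 0 ≤ l) (hlu : l ≤ u) :
    IntervalIntegrable (fun η => (x - ub η * (t - η)) * (ρb η * ub η)) volume l u := by
  obtain ⟨Mρ, hMρ⟩ := hρbloc u
  have hmeas : Measurable fun η => (x - ub η * (t - η)) * (ρb η * ub η) :=
    ((measurable_const.sub (hubmeas.mul ((measurable_const.sub measurable_id)))).mul
      (hρbmeas.mul hubmeas))
  refine intInt_of_bound hmeas hlu (C := (|x| + M * (|t| + u)) * (max Mρ 0 * M)) fun η hη => ?_
  have hη0 : 0 ≤ η := le_trans hl hη.1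
  have hηu : η ≤ u := hη.2
  have hu0 : (0:ℝ) ≤ u := le_trans hη0 hηu
  have hB : |ub η * (t - η)| ≤ M * (|t| + u) := by
    rw [abs_mul]
    refine mul_le_mul (hM η hη0) ?_ (abs_nonneg _) hM0
    calc |t - η| ≤ |t| + |η| := abs_sub _ _
    _ ≤ |t| + u := by rw [abs_of_nonneg hη0]; linarith
  rw [abs_mul]
  refine mul_le_mul ?_ ?_ (abs_nonneg _)
    (add_nonneg (abs_nonneg x) (mul_nonneg hM0 (add_nonneg (abs_nonneg t) hu0)))
  · refine abs_le.2 ⟨?_, ?_⟩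
    · have h1 := neg_abs_le x
      have h2 := le_abs_self (ub η * (t - η))
      linarith
    · have h1 := le_abs_self x
      have h2 := neg_abs_le (ub η * (t - η))
      linarith
  · have hubη := hubpos η hη0
    have hρbη := hρbpos η hη0
    rw [abs_of_pos (by positivity)]
    exact mul_le_mul (le_max_of_le_left (hMρ η ⟨hη0, hηu⟩)) ((le_abs_self _).trans (hM η hη0))
      hubη.le (le_max_right _ _)

lemma RInt (hρ0meas : Measurable ρ0)
    (hρ0pos : ∀ η, 0 ≤ η → 0 < ρ0 η)
    (hρ0loc : ∀ K : ℝ, ∃ M : ℝ, ∀ η ∈ Set.Icc (0:ℝ) K, ρ0 η ≤ M)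
    {l u : ℝ} (hl : 0 ≤ l) (hlu : l ≤ u) :
    IntervalIntegrable ρ0 volume l u := by
  obtain ⟨Mρ, hMρ⟩ := hρ0loc u
  refine intInt_of_bound hρ0meas hlu (C := max Mρ 0) fun η hη => ?_
  have hη0 : 0 ≤ η := le_trans hl hη.1
  rw [abs_of_pos (hρ0pos η hη0)]
  exact le_max_of_le_left (hMρ η ⟨hη0, hη.2⟩)

lemma SInt (hρbmeas : Measurable ρb) (hubmeas : Measurable ub)
    (hρbpos : ∀ η, 0 ≤ η → 0 < ρb η)
    (hubpos : ∀ η, 0 ≤ η → 0 < ub η)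
    (hρbloc : ∀ K : ℝ, ∃ M : ℝ, ∀ η ∈ Set.Icc (0:ℝ) K, ρb η ≤ M)
    {M : ℝ} (hM : ∀ η, 0 ≤ η → |ub η| ≤ M)
    {l u : ℝ} (hl : 0 ≤ l) (hlu : l ≤ u) :
    IntervalIntegrable (fun η => ρb η * ub η) volume l u := by
  obtain ⟨Mρ, hMρ⟩ := hρbloc u
  refine intInt_of_bound (hρbmeas.mul hubmeas) hlu (C := max Mρ 0 * M) fun η hη => ?_
  have hη0 : 0 ≤ η := le_trans hl hη.1
  have hubη := hubpos η hη0
  have hρbη := hρbpos η hη0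
  rw [abs_of_pos (show (0:ℝ) < (ρb * ub) η from mul_pos hρbη hubη)]
  exact mul_le_mul (le_max_of_le_left (hMρ η ⟨hη0, hη.2⟩)) ((le_abs_self _).trans (hM η hη0))
    hubη.le (le_max_right _ _)



lemma Finc (hρ0meas : Measurable ρ0) (hu0meas : Measurable u0)
    (hρ0pos : ∀ η, 0 ≤ η → 0 < ρ0 η)
    (hρ0loc : ∀ K : ℝ, ∃ M : ℝ, ∀ η ∈ Set.Icc (0:ℝ) K, ρ0 η ≤ M)
    {M : ℝ} (hM : ∀ η, 0 ≤ η → |u0 η| ≤ M) (hM0 : 0 ≤ M)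
    {x t y1 y2 : ℝ} (ht : 0 ≤ t) (hy1 : 0 ≤ y1) (h12 : y1 < y2) (hxy : x + t * M ≤ y1) :
    Fpot ρ0 u0 y1 x t < Fpot ρ0 u0 y2 x t := by
  have h1 := FInt hρ0meas hu0meas hρ0pos hρ0loc hM hM0 x t (le_refl (0:ℝ)) hy1
  have h2 := FInt hρ0meas hu0meas hρ0pos hρ0loc hM hM0 x t hy1 h12.le
  have hadd := intervalIntegral.integral_add_adjacent_intervals h1 h2
  have hpos : 0 < ∫ η in y1..y2, (t * u0 η + η - x) * ρ0 η := by
    refine intervalIntegral.intervalIntegral_pos_of_pos_on h2 (fun η hη => ?_) h12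
    have hη0 : 0 ≤ η := le_trans hy1 hη.1.le
    have hρ := hρ0pos η hη0
    have htu : -(t * M) ≤ t * u0 η := by nlinarith [hM η hη0, neg_abs_le (u0 η)]
    have : 0 < t * u0 η + η - x := by nlinarith [hη.1]
    positivity
  simp only [Fpot]
  linarith

lemma Fdec (hρ0meas : Measurable ρ0) (hu0meas : Measurable u0)
    (hρ0pos : ∀ η, 0 ≤ η → 0 < ρ0 η)
    (hρ0loc : ∀ K : ℝ, ∃ M : ℝ, ∀ η ∈ Set.Icc (0:ℝ) K, ρ0 η ≤ M)
    {M : ℝ} (hM : ∀ η, 0 ≤ η → |u0 η| ≤ M) (hM0 : 0 ≤ M)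
    {x t y1 y2 : ℝ} (ht : 0 ≤ t) (hy1 : 0 ≤ y1) (h12 : y1 < y2) (hxy : y2 ≤ x - t * M) :
    Fpot ρ0 u0 y2 x t < Fpot ρ0 u0 y1 x t := by
  have h1 := FInt hρ0meas hu0meas hρ0pos hρ0loc hM hM0 x t (le_refl (0:ℝ)) hy1
  have h2 := FInt hρ0meas hu0meas hρ0pos hρ0loc hM hM0 x t hy1 h12.le
  have hadd := intervalIntegral.integral_add_adjacent_intervals h1 h2
  have hpos : 0 < ∫ η in y1..y2, -((t * u0 η + η - x) * ρ0 η) := by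
    refine intervalIntegral.intervalIntegral_pos_of_pos_on h2.neg (fun η hη => ?_) h12
    have hη0 : 0 ≤ η := le_trans hy1 hη.1.le
    have hρ := hρ0pos η hη0
    have : t * u0 η + η - x < 0 := by nlinarith [hM η hη0, le_abs_self (u0 η), hη.2]
    simp only [neg_pos]
    exact mul_neg_of_neg_of_pos this hρ
  rw [intervalIntegral.integral_neg] at hpos
  simp only [Fpot]
  linarith

lemma Ginc1 (hρbmeas : Measurable ρb) (hubmeas : Measurable ub)
    (hρbpos : ∀ η, 0 ≤ η → 0 < ρb η)
    (hubpos : ∀ η, 0 ≤ η → 0 < ub η)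
    (hρbloc : ∀ K : ℝ, ∃ M : ℝ, ∀ η ∈ Set.Icc (0:ℝ) K, ρb η ≤ M)
    {M : ℝ} (hM : ∀ η, 0 ≤ η → |ub η| ≤ M) (hM0 : 0 ≤ M)
    {x t τ1 τ2 : ℝ} (ht : 0 ≤ t) (hτ1 : 0 ≤ τ1) (h12 : τ1 < τ2) (hx : t * M < x) :
    Gpot ρb ub τ1 x t < Gpot ρb ub τ2 x t := by
  have h1 := GInt hρbmeas hubmeas hρbpos hubpos hρbloc hM hM0 x t (le_refl (0:ℝ)) hτ1
  have h2 := GInt hρbmeas hubmeas hρbpos hubpos hρbloc hM hM0 x t hτ1 h12.le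
  have hadd := intervalIntegral.integral_add_adjacent_intervals h1 h2
  have hpos : 0 < ∫ η in τ1..τ2, (x - ub η * (t - η)) * (ρb η * ub η) := by
    refine intervalIntegral.intervalIntegral_pos_of_pos_on h2 (fun η hη => ?_) h12
    have hη0 : 0 ≤ η := le_trans hτ1 hη.1.le
    have hρ := hρbpos η hη0
    have hub := hubpos η hη0
    have hfac : 0 < x - ub η * (t - η) := by
      rcases le_or_gt η t with h | h
      · have h1' : ub η * (t - η) ≤ M * (t - η) := by
          nlinarith [le_abs_self (ub η), hM η hη0]
        nlinarith
      · nlinarith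
    positivity
  simp only [Gpot]
  linarith

lemma Ginc2 (hρbmeas : Measurable ρb) (hubmeas : Measurable ub)
    (hρbpos : ∀ η, 0 ≤ η → 0 < ρb η)
    (hubpos : ∀ η, 0 ≤ η → 0 < ub η)
    (hρbloc : ∀ K : ℝ, ∃ M : ℝ, ∀ η ∈ Set.Icc (0:ℝ) K, ρb η ≤ M)
    {M : ℝ} (hM : ∀ η, 0 ≤ η → |ub η| ≤ M) (hM0 : 0 ≤ M)
    {x t τ1 τ2 : ℝ} (ht : 0 ≤ t) (hx : 0 ≤ x) (hτ1 : t ≤ τ1) (h12 : τ1 < τ2) :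
    Gpot ρb ub τ1 x t < Gpot ρb ub τ2 x t := by
  have hτ10 : 0 ≤ τ1 := le_trans ht hτ1
  have h1 := GInt hρbmeas hubmeas hρbpos hubpos hρbloc hM hM0 x t (le_refl (0:ℝ)) hτ10
  have h2 := GInt hρbmeas hubmeas hρbpos hubpos hρbloc hM hM0 x t hτ10 h12.le
  have hadd := intervalIntegral.integral_add_adjacent_intervals h1 h2
  have hpos : 0 < ∫ η in τ1..τ2, (x - ub η * (t - η)) * (ρb η * ub η) := by
    refine intervalIntegral.intervalIntegral_pos_of_pos_on h2 (fun η hη => ?_) h12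
    have hη0 : 0 ≤ η := le_trans hτ10 hη.1.le
    have hρ := hρbpos η hη0
    have hub := hubpos η hη0
    have hfac : 0 < x - ub η * (t - η) := by nlinarith [hη.1]
    positivity
  simp only [Gpot]
  linarith

lemma Rmono (hρ0meas : Measurable ρ0)
    (hρ0pos : ∀ η, 0 ≤ η → 0 < ρ0 η)
    (hρ0loc : ∀ K : ℝ, ∃ M : ℝ, ∀ η ∈ Set.Icc (0:ℝ) K, ρ0 η ≤ M)
    {y1 y2 : ℝ} (hy1 : 0 ≤ y1) (h12 : y1 < y2) :
    (∫ η in (0:ℝ)..y1, ρ0 η) < ∫ η in (0:ℝ)..y2, ρ0 η := by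
  have h1 := RInt hρ0meas hρ0pos hρ0loc (le_refl (0:ℝ)) hy1
  have h2 := RInt hρ0meas hρ0pos hρ0loc hy1 h12.le
  have hadd := intervalIntegral.integral_add_adjacent_intervals h1 h2
  have hpos : 0 < ∫ η in y1..y2, ρ0 η :=
    intervalIntegral.intervalIntegral_pos_of_pos_on h2
      (fun η hη => hρ0pos η (le_trans hy1 hη.1.le)) h12
  linarith

lemma Smono (hρbmeas : Measurable ρb) (hubmeas : Measurable ub)
    (hρbpos : ∀ η, 0 ≤ η → 0 < ρb η)
    (hubpos : ∀ η, 0 ≤ η → 0 < ub η)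
    (hρbloc : ∀ K : ℝ, ∃ M : ℝ, ∀ η ∈ Set.Icc (0:ℝ) K, ρb η ≤ M)
    {M : ℝ} (hM : ∀ η, 0 ≤ η → |ub η| ≤ M)
    {y1 y2 : ℝ} (hy1 : 0 ≤ y1) (h12 : y1 < y2) :
    (∫ η in (0:ℝ)..y1, ρb η * ub η) < ∫ η in (0:ℝ)..y2, ρb η * ub η := by
  have h1 := SInt hρbmeas hubmeas hρbpos hubpos hρbloc hM (le_refl (0:ℝ)) hy1
  have h2 := SInt hρbmeas hubmeas hρbpos hubpos hρbloc hM hy1 h12.le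
  have hadd := intervalIntegral.integral_add_adjacent_intervals h1 h2
  have hpos : 0 < ∫ η in y1..y2, ρb η * ub η := by
    refine intervalIntegral.intervalIntegral_pos_of_pos_on h2 (fun η hη => ?_) h12
    have hη0 : 0 ≤ η := le_trans hy1 hη.1.le
    exact mul_pos (hρbpos η hη0) (hubpos η hη0)
  linarith

lemma Fxdiff (hρ0meas : Measurable ρ0) (hu0meas : Measurable u0)
    (hρ0pos : ∀ η, 0 ≤ η → 0 < ρ0 η)
    (hρ0loc : ∀ K : ℝ, ∃ M : ℝ, ∀ η ∈ Set.Icc (0:ℝ) K, ρ0 η ≤ M)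
    {M : ℝ} (hM : ∀ η, 0 ≤ η → |u0 η| ≤ M) (hM0 : 0 ≤ M)
    {y : ℝ} (hy : 0 ≤ y) (x1 x2 t : ℝ) :
    Fpot ρ0 u0 y x1 t - Fpot ρ0 u0 y x2 t = (x2 - x1) * ∫ η in (0:ℝ)..y, ρ0 η := by
  have h1 := FInt hρ0meas hu0meas hρ0pos hρ0loc hM hM0 x1 t (le_refl (0:ℝ)) hy
  have h2 := FInt hρ0meas hu0meas hρ0pos hρ0loc hM hM0 x2 t (le_refl (0:ℝ)) hy
  simp only [Fpot]
  rw [← intervalIntegral.integral_sub h1 h2, ← intervalIntegral.integral_const_mul]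
  refine intervalIntegral.integral_congr fun η _ => ?_
  ring

lemma Gxdiff (hρbmeas : Measurable ρb) (hubmeas : Measurable ub)
    (hρbpos : ∀ η, 0 ≤ η → 0 < ρb η)
    (hubpos : ∀ η, 0 ≤ η → 0 < ub η)
    (hρbloc : ∀ K : ℝ, ∃ M : ℝ, ∀ η ∈ Set.Icc (0:ℝ) K, ρb η ≤ M)
    {M : ℝ} (hM : ∀ η, 0 ≤ η → |ub η| ≤ M) (hM0 : 0 ≤ M)
    {τ : ℝ} (hτ : 0 ≤ τ) (x1 x2 t : ℝ) :
    Gpot ρb ub τ x1 t - Gpot ρb ub τ x2 t = (x1 - x2) * ∫ η in (0:ℝ)..τ, ρb η * ub η := by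
  have h1 := GInt hρbmeas hubmeas hρbpos hubpos hρbloc hM hM0 x1 t (le_refl (0:ℝ)) hτ
  have h2 := GInt hρbmeas hubmeas hρbpos hubpos hρbloc hM hM0 x2 t (le_refl (0:ℝ)) hτ
  simp only [Gpot]
  rw [← intervalIntegral.integral_sub h1 h2, ← intervalIntegral.integral_const_mul]
  refine intervalIntegral.integral_congr fun η _ => ?_
  ring

lemma Fcont (hρ0meas : Measurable ρ0) (hu0meas : Measurable u0)
    (hρ0pos : ∀ η, 0 ≤ η → 0 < ρ0 η)
    (hρ0loc : ∀ K : ℝ, ∃ M : ℝ, ∀ η ∈ Set.Icc (0:ℝ) K, ρ0 η ≤ M)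
    {M : ℝ} (hM : ∀ η, 0 ≤ η → |u0 η| ≤ M) (hM0 : 0 ≤ M)
    (x t : ℝ) {K : ℝ} (hK : 0 ≤ K) :
    ContinuousOn (fun y => Fpot ρ0 u0 y x t) (Set.Icc 0 K) := by
  have hInt : IntegrableOn (fun η => (t * u0 η + η - x) * ρ0 η) (Set.uIcc 0 K) volume := by
    rw [uIcc_of_le hK, integrableOn_Icc_iff_integrableOn_Ioc]
    exact (FInt hρ0meas hu0meas hρ0pos hρ0loc hM hM0 x t (le_refl (0:ℝ)) hK).1
  have := intervalIntegral.continuousOn_primitive_interval (a := (0:ℝ)) (b := K) hInt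
  rw [uIcc_of_le hK] at this
  simpa only [Fpot] using this

lemma Gcont (hρbmeas : Measurable ρb) (hubmeas : Measurable ub)
    (hρbpos : ∀ η, 0 ≤ η → 0 < ρb η)
    (hubpos : ∀ η, 0 ≤ η → 0 < ub η)
    (hρbloc : ∀ K : ℝ, ∃ M : ℝ, ∀ η ∈ Set.Icc (0:ℝ) K, ρb η ≤ M)
    {M : ℝ} (hM : ∀ η, 0 ≤ η → |ub η| ≤ M) (hM0 : 0 ≤ M)
    (x t : ℝ) {K : ℝ} (hK : 0 ≤ K) :
    ContinuousOn (fun τ => Gpot ρb ub τ x t) (Set.Icc 0 K) := by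
  have hInt : IntegrableOn (fun η => (x - ub η * (t - η)) * (ρb η * ub η)) (Set.uIcc 0 K) volume := by
    rw [uIcc_of_le hK, integrableOn_Icc_iff_integrableOn_Ioc]
    exact (GInt hρbmeas hubmeas hρbpos hubpos hρbloc hM hM0 x t (le_refl (0:ℝ)) hK).1
  have := intervalIntegral.continuousOn_primitive_interval (a := (0:ℝ)) (b := K) hInt
  rw [uIcc_of_le hK] at this
  simpa only [Gpot] using this

end FG



lemma hull_two {s : Set (ℝ × ℝ)} {p q : ℝ × ℝ} (hp : p ∈ convexHull ℝ s)
    (hq : q ∈ convexHull ℝ s) {θ : ℝ} (h0 : 0 ≤ θ) (h1 : θ ≤ 1) :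
    (1 - θ) • p + θ • q ∈ convexHull ℝ s :=
  (convex_convexHull ℝ s) hp hq (by linarith) h0 (by ring)

lemma exists_theta {u v c : ℝ} (h1 : u ≤ c) (h2 : c ≤ v) :
    ∃ θ : ℝ, 0 ≤ θ ∧ θ ≤ 1 ∧ (1 - θ) * u + θ * v = c := by
  rcases eq_or_lt_of_le (h1.trans h2) with h | h
  · refine ⟨0, le_refl _, zero_le_one, ?_⟩
    have : u = c := le_antisymm h1 (h ▸ h2)
    simp [this]
  · refine ⟨(c - u) / (v - u), div_nonneg (by linarith) (by linarith), ?_, ?_⟩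
    · rw [div_le_one (by linarith)]; linarith
    · have hvu : v - u ≠ 0 := by linarith
      field_simp
      ring

set_option maxHeartbeats 2000000 in
theorem stmt12
    (ρ0 u0 ρb ub : ℝ → ℝ)
    (hρ0meas : Measurable ρ0) (hu0meas : Measurable u0)
    (hρbmeas : Measurable ρb) (hubmeas : Measurable ub)
    (hρ0pos : ∀ η, 0 ≤ η → 0 < ρ0 η)
    (hρbpos : ∀ η, 0 ≤ η → 0 < ρb η)
    (hubpos : ∀ η, 0 ≤ η → 0 < ub η)
    (hρ0loc : ∀ K : ℝ, ∃ M : ℝ, ∀ η ∈ Set.Icc (0:ℝ) K, ρ0 η ≤ M)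
    (hρbloc : ∀ K : ℝ, ∃ M : ℝ, ∀ η ∈ Set.Icc (0:ℝ) K, ρb η ≤ M)
    (hu0bdd : ∃ M : ℝ, ∀ η, 0 ≤ η → |u0 η| ≤ M)
    (hubbdd : ∃ M : ℝ, ∀ η, 0 ≤ η → |ub η| ≤ M)
    (Fm Gm : ℝ → ℝ → ℝ)
    (hFm : ∀ x t, 0 ≤ x → 0 ≤ t → IsMinValue (fun y => Fpot ρ0 u0 y x t) (Fm x t))
    (hGm : ∀ x t, 0 ≤ x → 0 ≤ t → IsMinValue (fun τ => Gpot ρb ub τ x t) (Gm x t))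
    (ys yS τs τS : ℝ → ℝ → ℝ)
    (hys : ∀ x t, 0 ≤ x → 0 ≤ t → SmallestMinimizer (fun y => Fpot ρ0 u0 y x t) (ys x t))
    (hyS : ∀ x t, 0 ≤ x → 0 ≤ t → LargestMinimizer (fun y => Fpot ρ0 u0 y x t) (yS x t))
    (hτs : ∀ x t, 0 ≤ x → 0 ≤ t → SmallestMinimizer (fun τ => Gpot ρb ub τ x t) (τs x t))
    (hτS : ∀ x t, 0 ≤ x → 0 ≤ t → LargestMinimizer (fun τ => Gpot ρb ub τ x t) (τS x t))
    (t₀ : ℝ) (ht₀ : 0 < t₀) :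
    (⋃ x ∈ Set.Ici (0:ℝ), charTriangle Fm Gm ys yS τs τS x t₀) =
      Set.Ici (0:ℝ) ×ˢ Set.Icc (0:ℝ) t₀ := by
  obtain ⟨Mu, hMu⟩ := hu0bdd
  obtain ⟨Mb, hMb⟩ := hubbdd
  have ht0 : (0:ℝ) ≤ t₀ := ht₀.le
  set M : ℝ := max (max Mu Mb) 0 with hMdef
  have hM0 : (0:ℝ) ≤ M := le_max_right _ _
  have hMu' : ∀ η, 0 ≤ η → |u0 η| ≤ M :=
    fun η hη => (hMu η hη).trans ((le_max_left Mu Mb).trans (le_max_left _ _))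
  have hMb' : ∀ η, 0 ≤ η → |ub η| ≤ M :=
    fun η hη => (hMb η hη).trans ((le_max_right Mu Mb).trans (le_max_left _ _))
  set H : ℝ → ℝ → ℝ :=
    fun s x => Fpot ρ0 u0 (max s 0) x t₀ + Gpot ρb ub (max (-s) 0) x t₀ with hHdef
  set W : ℝ → ℝ :=
    fun s => (∫ η in (0:ℝ)..(max s 0), ρ0 η) - ∫ η in (0:ℝ)..(max (-s) 0), ρb η * ub η with hWdef
  set Hm : ℝ → ℝ := fun x => min (Fm x t₀) (Gm x t₀) with hHmdef
  set sL : ℝ → ℝ := fun x => if Fm x t₀ < Gm x t₀ then ys x t₀ else -(τS x t₀) with hsLdef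
  set sR : ℝ → ℝ := fun x => if Gm x t₀ < Fm x t₀ then -(τs x t₀) else yS x t₀ with hsRdef
  have hF0 : ∀ x : ℝ, Fpot ρ0 u0 0 x t₀ = 0 := fun x => intervalIntegral.integral_same
  have hG0 : ∀ x : ℝ, Gpot ρb ub 0 x t₀ = 0 := fun x => intervalIntegral.integral_same
  have hHF : ∀ s x : ℝ, 0 ≤ s → H s x = Fpot ρ0 u0 s x t₀ := by
    intro s x hs
    simp only [hHdef]
    rw [max_eq_left hs, max_eq_right (neg_nonpos.2 hs), hG0, add_zero]
  have hHG : ∀ s x : ℝ, s ≤ 0 → H s x = Gpot ρb ub (-s) x t₀ := by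
    intro s x hs
    simp only [hHdef]
    rw [max_eq_right hs, max_eq_left (neg_nonneg.2 hs), hF0, zero_add]
  have hFval : ∀ x, 0 ≤ x → ∀ s, MinimizesOn (fun y => Fpot ρ0 u0 y x t₀) s →
      Fpot ρ0 u0 s x t₀ = Fm x t₀ := by
    intro x hx s hmin
    obtain ⟨⟨aa, haa0, haaeq⟩, hlb⟩ := hFm x t₀ hx ht0
    exact le_antisymm (haaeq ▸ hmin.2 aa haa0) (hlb s hmin.1)
  have hGval : ∀ x, 0 ≤ x → ∀ s, MinimizesOn (fun τ => Gpot ρb ub τ x t₀) s →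
      Gpot ρb ub s x t₀ = Gm x t₀ := by
    intro x hx s hmin
    obtain ⟨⟨aa, haa0, haaeq⟩, hlb⟩ := hGm x t₀ hx ht0
    exact le_antisymm (haaeq ▸ hmin.2 aa haa0) (hlb s hmin.1)
  have hFof : ∀ x, 0 ≤ x → ∀ s, 0 ≤ s → Fpot ρ0 u0 s x t₀ = Fm x t₀ →
      MinimizesOn (fun y => Fpot ρ0 u0 y x t₀) s :=
    fun x hx s hs0 heq => ⟨hs0, fun bb hbb => heq.trans_le ((hFm x t₀ hx ht0).2 bb hbb)⟩
  have hGof : ∀ x, 0 ≤ x → ∀ s, 0 ≤ s → Gpot ρb ub s x t₀ = Gm x t₀ →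
      MinimizesOn (fun τ => Gpot ρb ub τ x t₀) s :=
    fun x hx s hs0 heq => ⟨hs0, fun bb hbb => heq.trans_le ((hGm x t₀ hx ht0).2 bb hbb)⟩
  have hHlb : ∀ x, 0 ≤ x → ∀ s, Hm x ≤ H s x := by
    intro x hx s
    simp only [hHmdef]
    rcases le_or_gt 0 s with hs | hs
    · rw [hHF s x hs]
      exact (min_le_left _ _).trans ((hFm x t₀ hx ht0).2 s hs)
    · rw [hHG s x hs.le]
      exact (min_le_right _ _).trans ((hGm x t₀ hx ht0).2 (-s) (by linarith))
  have hsLmin : ∀ x, 0 ≤ x → H (sL x) x = Hm x := by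
    intro x hx
    simp only [hsLdef, hHmdef]
    by_cases h : Fm x t₀ < Gm x t₀
    · rw [if_pos h, hHF _ _ (hys x t₀ hx ht0).1.1, hFval x hx _ (hys x t₀ hx ht0).1,
        min_eq_left h.le]
    · rw [if_neg h, hHG _ _ (neg_nonpos.2 (hτS x t₀ hx ht0).1.1), neg_neg,
        hGval x hx _ (hτS x t₀ hx ht0).1, min_eq_right (not_lt.1 h)]
  have hsRmin : ∀ x, 0 ≤ x → H (sR x) x = Hm x := by
    intro x hx
    simp only [hsRdef, hHmdef]
    by_cases h : Gm x t₀ < Fm x t₀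
    · rw [if_pos h, hHG _ _ (neg_nonpos.2 (hτs x t₀ hx ht0).1.1), neg_neg,
        hGval x hx _ (hτs x t₀ hx ht0).1, min_eq_right h.le]
    · rw [if_neg h, hHF _ _ (hyS x t₀ hx ht0).1.1, hFval x hx _ (hyS x t₀ hx ht0).1,
        min_eq_left (not_lt.1 h)]
  have hsLleast : ∀ x, 0 ≤ x → ∀ s, H s x = Hm x → sL x ≤ s := by
    intro x hx s hs
    simp only [hsLdef]
    by_cases h : Fm x t₀ < Gm x t₀
    · rw [if_pos h]
      rcases le_or_gt 0 s with hs0 | hs0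
      · refine (hys x t₀ hx ht0).2 s ?_
        refine hFof x hx s hs0 ?_
        rw [← hHF s x hs0, hs]
        simp only [hHmdef]
        exact min_eq_left h.le
      · exfalso
        have h1 : Hm x ≤ Gm x t₀ := by simp only [hHmdef]; exact min_le_right _ _
        have h2 : Gm x t₀ ≤ Gpot ρb ub (-s) x t₀ := (hGm x t₀ hx ht0).2 (-s) (by linarith)
        have h3 : H s x = Gpot ρb ub (-s) x t₀ := hHG s x hs0.le
        have h4 : Hm x = min (Fm x t₀) (Gm x t₀) := by simp only [hHmdef]
        have h5 : min (Fm x t₀) (Gm x t₀) = Fm x t₀ := min_eq_left h.le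
        linarith [hs]
    · rw [if_neg h]
      by_contra hgt
      push_neg at hgt
      have hs0 : s < 0 := lt_of_lt_of_le hgt (neg_nonpos.2 (hτS x t₀ hx ht0).1.1)
      have h3 : H s x = Gpot ρb ub (-s) x t₀ := hHG s x hs0.le
      have heq : Gpot ρb ub (-s) x t₀ = Gm x t₀ := by
        rw [← h3, hs]
        simp only [hHmdef]
        exact min_eq_right (not_lt.1 h)
      have := (hτS x t₀ hx ht0).2 (-s) (hGof x hx (-s) (by linarith) heq)
      linarith
  have hsRgreatest : ∀ x, 0 ≤ x → ∀ s, H s x = Hm x → s ≤ sR x := by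
    intro x hx s hs
    simp only [hsRdef]
    by_cases h : Gm x t₀ < Fm x t₀
    · rw [if_pos h]
      by_contra hgt
      push_neg at hgt
      rcases le_or_gt 0 s with hs0 | hs0
      · have h1 : Hm x ≤ Fm x t₀ := by simp only [hHmdef]; exact min_le_left _ _
        have h2 : Fm x t₀ ≤ Fpot ρ0 u0 s x t₀ := (hFm x t₀ hx ht0).2 s hs0
        have h3 : H s x = Fpot ρ0 u0 s x t₀ := hHF s x hs0
        have h5 : min (Fm x t₀) (Gm x t₀) = Gm x t₀ := min_eq_right h.le
        have h6 : Hm x = min (Fm x t₀) (Gm x t₀) := by simp only [hHmdef]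
        linarith [hs]
      · have h3 : H s x = Gpot ρb ub (-s) x t₀ := hHG s x hs0.le
        have heq : Gpot ρb ub (-s) x t₀ = Gm x t₀ := by
          rw [← h3, hs]
          simp only [hHmdef]
          exact min_eq_right h.le
        have := (hτs x t₀ hx ht0).2 (-s) (hGof x hx (-s) (by linarith) heq)
        linarith
    · rw [if_neg h]
      by_contra hgt
      push_neg at hgt
      have hs0 : 0 ≤ s := le_trans (hyS x t₀ hx ht0).1.1 hgt.le
      have heq : Fpot ρ0 u0 s x t₀ = Fm x t₀ := by
        rw [← hHF s x hs0, hs]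
        simp only [hHmdef]
        exact min_eq_left (not_lt.1 h)
      have := (hyS x t₀ hx ht0).2 s (hFof x hx s hs0 heq)
      linarith
  have hsLR : ∀ x, 0 ≤ x → sL x ≤ sR x := fun x hx => hsLleast x hx _ (hsRmin x hx)
  have hHx : ∀ (s x1 x2 : ℝ), H s x1 - H s x2 = (x2 - x1) * W s := by
    intro s x1 x2
    have hF := Fxdiff hρ0meas hu0meas hρ0pos hρ0loc hMu' hM0 (le_max_right s 0) x1 x2 t₀
    have hG := Gxdiff hρbmeas hubmeas hρbpos hubpos hρbloc hMb' hM0 (le_max_right (-s) 0) x1 x2 t₀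
    simp only [hHdef, hWdef]
    linear_combination hF + hG
  have hWmono : ∀ s1 s2 : ℝ, s1 < s2 → W s1 < W s2 := by
    intro s1 s2 h12
    have hR0 : (∫ η in (0:ℝ)..(0:ℝ), ρ0 η) = 0 := intervalIntegral.integral_same
    have hS0 : (∫ η in (0:ℝ)..(0:ℝ), ρb η * ub η) = 0 := intervalIntegral.integral_same
    simp only [hWdef]
    rcases le_or_gt 0 s1 with h1 | h1
    · rw [max_eq_left h1, max_eq_left (le_trans h1 h12.le),
        max_eq_right (neg_nonpos.2 h1), max_eq_right (neg_nonpos.2 (le_trans h1 h12.le))]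
      have := Rmono hρ0meas hρ0pos hρ0loc h1 h12
      linarith
    · rcases le_or_gt s2 0 with h2 | h2
      · rw [max_eq_right h1.le, max_eq_right h2, max_eq_left (neg_nonneg.2 h1.le),
          max_eq_left (neg_nonneg.2 h2)]
        have := Smono hρbmeas hubmeas hρbpos hubpos hρbloc hMb' (neg_nonneg.2 h2) (show -s2 < -s1 by linarith)
        linarith
      · rw [max_eq_right h1.le, max_eq_left h2.le, max_eq_left (neg_nonneg.2 h1.le),
          max_eq_right (neg_nonpos.2 h2.le)]
        have hS := Smono hρbmeas hubmeas hρbpos hubpos hρbloc hMb' (le_refl (0:ℝ)) (by linarith : (0:ℝ) < -s1)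
        have hR := Rmono hρ0meas hρ0pos hρ0loc (le_refl (0:ℝ)) h2
        rw [hS0] at hS
        rw [hR0] at hR
        linarith
  have hWle : ∀ s1 s2 : ℝ, s1 ≤ s2 → W s1 ≤ W s2 := by
    intro s1 s2 h
    rcases eq_or_lt_of_le h with h | h
    · rw [h]
    · exact (hWmono s1 s2 h).le
  have hmono : ∀ x1 x2 s1 s2, 0 ≤ x1 → x1 < x2 → H s1 x1 = Hm x1 → H s2 x2 = Hm x2 →
      s1 ≤ s2 := by
    intro x1 x2 s1 s2 hx1 hx12 h1 h2
    by_contra hlt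
    push_neg at hlt
    have hW := hWmono s2 s1 hlt
    have e1 := hHx s1 x1 x2
    have e2 := hHx s2 x1 x2
    have l1 : Hm x1 ≤ H s2 x1 := hHlb x1 hx1 s2
    have l2 : Hm x2 ≤ H s1 x2 := hHlb x2 (by linarith) s1
    nlinarith [mul_pos (sub_pos.2 hx12) (sub_pos.2 hW)]
  have hUB : ∀ x, 0 ≤ x → ∀ s, H s x = Hm x → s ≤ x + t₀ * M := by
    intro x hx s hs
    by_contra hgt
    push_neg at hgt
    have hy1 : 0 ≤ x + t₀ * M := by positivity
    have hlt := Finc hρ0meas hu0meas hρ0pos hρ0loc hMu' hM0 ht0 hy1 hgt le_rfl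
    have h1 : Hm x ≤ Fm x t₀ := by simp only [hHmdef]; exact min_le_left _ _
    have h2 : Fm x t₀ ≤ Fpot ρ0 u0 (x + t₀ * M) x t₀ := (hFm x t₀ hx ht0).2 _ hy1
    have h3 : H s x = Fpot ρ0 u0 s x t₀ := hHF s x (le_trans hy1 hgt.le)
    linarith
  have hLB : ∀ x, t₀ * M < x → ∀ s, H s x = Hm x → x - t₀ * M ≤ s := by
    intro x hx s hs
    have hx0 : 0 ≤ x := le_trans (by positivity) hx.le
    by_contra h
    push_neg at h
    rcases le_or_gt 0 s with hs0 | hs0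
    · have hlt := Fdec hρ0meas hu0meas hρ0pos hρ0loc hMu' hM0 ht0 hs0 h le_rfl
      have h1 : Hm x ≤ Fm x t₀ := by simp only [hHmdef]; exact min_le_left _ _
      have h2 : Fm x t₀ ≤ Fpot ρ0 u0 (x - t₀ * M) x t₀ := (hFm x t₀ hx0 ht0).2 _ (by linarith)
      have h3 : H s x = Fpot ρ0 u0 s x t₀ := hHF s x hs0
      linarith
    · have hlt := Ginc1 hρbmeas hubmeas hρbpos hubpos hρbloc hMb' hM0 ht0 le_rfl
        (by linarith : (0:ℝ) < -s) hx
      have h1 : Hm x ≤ Gm x t₀ := by simp only [hHmdef]; exact min_le_right _ _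
      have h2 : Gm x t₀ ≤ Gpot ρb ub 0 x t₀ := (hGm x t₀ hx0 ht0).2 0 le_rfl
      have h3 : H s x = Gpot ρb ub (-s) x t₀ := hHG s x hs0.le
      linarith
  have hτb : ∀ x, 0 ≤ x → ∀ s, H s x = Hm x → -t₀ ≤ s := by
    intro x hx s hs
    by_contra h
    push_neg at h
    have hlt := Ginc2 hρbmeas hubmeas hρbpos hubpos hρbloc hMb' hM0 ht0 hx (le_refl t₀)
      (show t₀ < -s by linarith)
    have h1 : Hm x ≤ Gm x t₀ := by simp only [hHmdef]; exact min_le_right _ _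
    have h2 : Gm x t₀ ≤ Gpot ρb ub t₀ x t₀ := (hGm x t₀ hx ht0).2 t₀ ht0
    have h3 : H s x = Gpot ρb ub (-s) x t₀ := hHG s x (by linarith)
    linarith
  have hHmd : ∀ K x1 x2, 0 ≤ x1 → x1 ≤ K → 0 ≤ x2 → x2 ≤ K →
      |Hm x1 - Hm x2| ≤ (|W (-t₀)| + |W (K + t₀ * M)|) * |x1 - x2| := by
    intro K x1 x2 hx1 hx1K hx2 hx2K
    have hWC : ∀ x, 0 ≤ x → x ≤ K → |W (sL x)| ≤ |W (-t₀)| + |W (K + t₀ * M)| := by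
      intro x hx hxK
      have h1 : -t₀ ≤ sL x := hτb x hx _ (hsLmin x hx)
      have h2 : sL x ≤ K + t₀ * M := (hUB x hx _ (hsLmin x hx)).trans (by linarith)
      have l1 := hWle _ _ h1
      have l2 := hWle _ _ h2
      refine abs_le.2 ⟨?_, ?_⟩
      · have := neg_abs_le (W (-t₀))
        have := abs_nonneg (W (K + t₀ * M))
        linarith
      · have := le_abs_self (W (K + t₀ * M))
        have := abs_nonneg (W (-t₀))
        linarith
    have key : ∀ y z, 0 ≤ y → y ≤ K → 0 ≤ z → z ≤ K →
        Hm y - Hm z ≤ (|W (-t₀)| + |W (K + t₀ * M)|) * |y - z| := by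
      intro y z hy hyK hz hzK
      have e := hHx (sL z) y z
      have l : Hm y ≤ H (sL z) y := hHlb y hy _
      have m : H (sL z) z = Hm z := hsLmin z hz
      have b := hWC z hz hzK
      have h2 : (z - y) * W (sL z) ≤ (|W (-t₀)| + |W (K + t₀ * M)|) * |y - z| := by
        calc (z - y) * W (sL z) ≤ |(z - y) * W (sL z)| := le_abs_self _
        _ = |W (sL z)| * |y - z| := by rw [abs_mul, abs_sub_comm, mul_comm]
        _ ≤ (|W (-t₀)| + |W (K + t₀ * M)|) * |y - z| :=
            mul_le_mul_of_nonneg_right b (abs_nonneg _)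
      linarith
    have h1 := key x1 x2 hx1 hx1K hx2 hx2K
    have h2 := key x2 x1 hx2 hx2K hx1 hx1K
    rw [abs_sub_comm x2 x1] at h2
    exact abs_sub_le_iff.2 ⟨h1, h2⟩
  have hHcont : ∀ (x s0 : ℝ), ContinuousAt (fun s => H s x) s0 := by
    intro x s0
    set K := |s0| + 1 with hK
    have hK0 : (0:ℝ) ≤ K := by positivity
    have hFc := Fcont hρ0meas hu0meas hρ0pos hρ0loc hMu' hM0 x t₀ hK0
    have hGc := Gcont hρbmeas hubmeas hρbpos hubpos hρbloc hMb' hM0 x t₀ hK0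
    have hmax1 : ContinuousOn (fun s : ℝ => Fpot ρ0 u0 (max s 0) x t₀) (Icc (-K) K) := by
      refine hFc.comp ((continuous_id.max continuous_const).continuousOn) fun s hs => ?_
      exact ⟨le_max_right _ _, max_le hs.2 hK0⟩
    have hmax2 : ContinuousOn (fun s : ℝ => Gpot ρb ub (max (-s) 0) x t₀) (Icc (-K) K) := by
      refine hGc.comp ((continuous_neg.max continuous_const).continuousOn) fun s hs => ?_
      exact ⟨le_max_right _ _, max_le (by linarith [hs.1]) hK0⟩
    have hsum : ContinuousOn (fun s => H s x) (Icc (-K) K) := by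
      simp only [hHdef]
      exact hmax1.add hmax2
    refine hsum.continuousAt (Icc_mem_nhds ?_ ?_)
    · have := neg_abs_le s0
      simp only [hK]
      linarith
    · have := le_abs_self s0
      simp only [hK]
      linarith
  have hlim : ∀ xb, 0 ≤ xb → ∀ z s : ℕ → ℝ, (∀ n, 0 ≤ z n) → Tendsto z atTop (𝓝 xb) →
      (∀ n, H (s n) (z n) = Hm (z n)) → ∀ sb, Tendsto s atTop (𝓝 sb) → H sb xb = Hm xb := by
    intro xb hxb z s hz0 hz hminz sb hs
    have hzb : ∀ᶠ n in atTop, z n ≤ xb + 1 :=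
      hz.eventually (eventually_le_nhds (by linarith))
    have h1 : Tendsto (fun n => Hm (z n)) atTop (𝓝 (Hm xb)) := by
      rw [tendsto_iff_dist_tendsto_zero]
      have hb : Tendsto (fun n => (|W (-t₀)| + |W ((xb + 1) + t₀ * M)|) * |z n - xb|)
          atTop (𝓝 0) := by
        have h0 : Tendsto (fun n => z n - xb) atTop (𝓝 0) := by
          simpa using hz.sub (tendsto_const_nhds (x := xb))
        have := (h0.abs).const_mul (|W (-t₀)| + |W ((xb + 1) + t₀ * M)|)
        simpa using this
      refine squeeze_zero' (Eventually.of_forall fun n => dist_nonneg) ?_ hb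
      filter_upwards [hzb] with n hn
      rw [Real.dist_eq]
      exact hHmd (xb + 1) (z n) xb (hz0 n) hn hxb (by linarith)
    have hsb : ∀ᶠ n in atTop, s n ∈ Icc (sb - 1) (sb + 1) :=
      hs.eventually (Icc_mem_nhds (by linarith) (by linarith))
    have h2 : Tendsto (fun n => (z n - xb) * W (s n)) atTop (𝓝 0) := by
      rw [tendsto_zero_iff_abs_tendsto_zero]
      have hb : Tendsto (fun n => |z n - xb| * (|W (sb - 1)| + |W (sb + 1)|)) atTop (𝓝 0) := by
        have h0 : Tendsto (fun n => z n - xb) atTop (𝓝 0) := by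
          simpa using hz.sub (tendsto_const_nhds (x := xb))
        have := (h0.abs).mul_const (|W (sb - 1)| + |W (sb + 1)|)
        simpa using this
      refine squeeze_zero' (Eventually.of_forall fun n => abs_nonneg _) ?_ hb
      filter_upwards [hsb] with n hn
      simp only [Function.comp_apply]
      rw [abs_mul]
      refine mul_le_mul_of_nonneg_left ?_ (abs_nonneg _)
      have l1 := hWle _ _ hn.1
      have l2 := hWle _ _ hn.2
      refine abs_le.2 ⟨?_, ?_⟩
      · have := neg_abs_le (W (sb - 1))
        have := abs_nonneg (W (sb + 1))
        linarith
      · have := le_abs_self (W (sb + 1))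
        have := abs_nonneg (W (sb - 1))
        linarith
    have h3 : Tendsto (fun n => H (s n) xb) atTop (𝓝 (Hm xb)) := by
      have he : ∀ n, H (s n) xb = Hm (z n) + (z n - xb) * W (s n) := by
        intro n
        have := hHx (s n) xb (z n)
        rw [hminz n] at this
        linarith
      simp only [he]
      simpa using h1.add h2
    have h4 : Tendsto (fun n => H (s n) xb) atTop (𝓝 (H sb xb)) :=
      (hHcont xb sb).tendsto.comp hs
    exact tendsto_nhds_unique h4 h3
  have hτle : ∀ x, 0 ≤ x → ∀ τ', MinimizesOn (fun τ => Gpot ρb ub τ x t₀) τ' → τ' ≤ t₀ := by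
    intro x hx τ' hminτ
    by_contra h
    push_neg at h
    have hlt := Ginc2 hρbmeas hubmeas hρbpos hubpos hρbloc hMb' hM0 ht0 hx (le_refl t₀) h
    have := hminτ.2 t₀ ht0
    simp only at this
    linarith
  have happx : ∀ x : ℝ, 0 ≤ x → (x, t₀) ∈ charTriangle Fm Gm ys yS τs τS x t₀ := by
    intro x hx
    unfold charTriangle
    split_ifs with h1 h2 h3
    · rw [h1.1]
      exact subset_convexHull ℝ _ (by simp)
    · exact subset_convexHull ℝ _ (by simp)
    · exact subset_convexHull ℝ _ (by simp)
    · exact subset_convexHull ℝ _ (by simp)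
  apply Set.eq_of_subset_of_subset
  · refine Set.iUnion₂_subset fun x hx => ?_
    have hx0 : (0:ℝ) ≤ x := hx
    have hconv : Convex ℝ (Set.Ici (0:ℝ) ×ˢ Set.Icc (0:ℝ) t₀) :=
      (convex_Ici 0).prod (convex_Icc 0 t₀)
    unfold charTriangle
    split_ifs with h1 h2 h3
    · refine convexHull_min ?_ hconv
      intro v hv
      simp only [mem_insert_iff, mem_singleton_iff] at hv
      rcases hv with rfl | rfl | rfl <;>
        simp only [Set.mem_prod, Set.mem_Ici, Set.mem_Icc]
      · exact ⟨le_refl 0, ht0, le_rfl⟩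
      · exact ⟨le_refl 0, le_refl 0, ht0⟩
      · exact ⟨(hyS 0 t₀ le_rfl ht0).1.1, le_refl 0, ht0⟩
    · refine convexHull_min ?_ hconv
      intro v hv
      simp only [mem_insert_iff, mem_singleton_iff] at hv
      rcases hv with rfl | rfl | rfl <;>
        simp only [Set.mem_prod, Set.mem_Ici, Set.mem_Icc]
      · exact ⟨hx0, ht0, le_rfl⟩
      · exact ⟨(hys x t₀ hx0 ht0).1.1, le_refl 0, ht0⟩
      · exact ⟨(hyS x t₀ hx0 ht0).1.1, le_refl 0, ht0⟩
    · refine convexHull_min ?_ hconv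
      intro v hv
      simp only [mem_insert_iff, mem_singleton_iff] at hv
      rcases hv with rfl | rfl | rfl <;>
        simp only [Set.mem_prod, Set.mem_Ici, Set.mem_Icc]
      · exact ⟨hx0, ht0, le_rfl⟩
      · exact ⟨le_refl 0, (hτs x t₀ hx0 ht0).1.1, hτle x hx0 _ (hτs x t₀ hx0 ht0).1⟩
      · exact ⟨le_refl 0, (hτS x t₀ hx0 ht0).1.1, hτle x hx0 _ (hτS x t₀ hx0 ht0).1⟩
    · refine convexHull_min ?_ hconv
      intro v hv
      simp only [mem_insert_iff, mem_singleton_iff] at hv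
      rcases hv with rfl | rfl | rfl | rfl <;>
        simp only [Set.mem_prod, Set.mem_Ici, Set.mem_Icc]
      · exact ⟨hx0, ht0, le_rfl⟩
      · exact ⟨(hyS x t₀ hx0 ht0).1.1, le_refl 0, ht0⟩
      · exact ⟨le_refl 0, (hτS x t₀ hx0 ht0).1.1, hτle x hx0 _ (hτS x t₀ hx0 ht0).1⟩
      · exact ⟨le_refl 0, le_refl 0, ht0⟩
  · rintro ⟨a, b⟩ hab
    simp only [Set.mem_prod, Set.mem_Ici, Set.mem_Icc] at hab
    obtain ⟨ha, hb0, hbt₀⟩ := hab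
    rcases eq_or_lt_of_le hbt₀ with hbt | hbt
    · exact Set.mem_biUnion (Set.mem_Ici.2 ha) (by rw [hbt]; exact happx a ha)
    have htb : 0 < t₀ - b := by linarith
    have hμ0 : 0 ≤ (t₀ - b) / t₀ := div_nonneg htb.le ht0
    have hμ1 : (t₀ - b) / t₀ ≤ 1 := by rw [div_le_one ht₀]; linarith
    have hmem1 : ∀ x, 0 ≤ x → 0 ≤ t₀ * a - b * x →
        (x = 0 ∨ sL x ≤ (t₀ * a - b * x) / (t₀ - b)) →
        (t₀ * a - b * x) / (t₀ - b) ≤ sR x →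
        (a, b) ∈ charTriangle Fm Gm ys yS τs τS x t₀ := by
      intro x hx hc h1 h2
      set sP := (t₀ * a - b * x) / (t₀ - b) with hsP
      have hsP0 : 0 ≤ sP := div_nonneg hc htb.le
      have hkey : (1 - (t₀ - b) / t₀) • ((x:ℝ), t₀) + ((t₀ - b) / t₀) • ((sP:ℝ), (0:ℝ))
          = ((a:ℝ), b) := by
        simp only [Prod.smul_mk, Prod.mk_add_mk, smul_eq_mul, Prod.mk.injEq]
        constructor
        · rw [hsP]; field_simp; ring
        · field_simp; ring
      unfold charTriangle
      split_ifs with hA hB hC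
      · obtain ⟨hx0, hFG⟩ := hA
        subst hx0
        have hsRx : sR 0 = yS 0 t₀ := by simp only [hsRdef]; rw [if_neg (not_lt.2 hFG.le)]
        rw [hsRx] at h2
        obtain ⟨θ, hθ0, hθ1, hθe⟩ := exists_theta hsP0 h2
        have he : (1 - θ) • ((0:ℝ), (0:ℝ)) + θ • (yS 0 t₀, (0:ℝ)) = ((sP:ℝ), (0:ℝ)) := by
          simp only [Prod.smul_mk, Prod.mk_add_mk, smul_eq_mul, Prod.mk.injEq]
          exact ⟨hθe, by ring⟩
        have hq : ((sP:ℝ), (0:ℝ)) ∈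
            convexHull ℝ {((0:ℝ), t₀), ((0:ℝ), (0:ℝ)), (yS 0 t₀, (0:ℝ))} := by
          rw [← he]
          exact hull_two (subset_convexHull ℝ _ (by simp)) (subset_convexHull ℝ _ (by simp))
            hθ0 hθ1
        rw [← hkey]
        exact hull_two (subset_convexHull ℝ _ (by simp)) hq hμ0 hμ1
      · have hx0 : x ≠ 0 := fun h => hA ⟨h, hB⟩
        have hsLx : sL x = ys x t₀ := by simp only [hsLdef]; rw [if_pos hB]
        have hsRx : sR x = yS x t₀ := by simp only [hsRdef]; rw [if_neg (not_lt.2 hB.le)]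
        have h1' : ys x t₀ ≤ sP := by
          rcases h1 with h | h
          · exact absurd h hx0
          · rwa [hsLx] at h
        rw [hsRx] at h2
        obtain ⟨θ, hθ0, hθ1, hθe⟩ := exists_theta h1' h2
        have he : (1 - θ) • (ys x t₀, (0:ℝ)) + θ • (yS x t₀, (0:ℝ)) = ((sP:ℝ), (0:ℝ)) := by
          simp only [Prod.smul_mk, Prod.mk_add_mk, smul_eq_mul, Prod.mk.injEq]
          exact ⟨hθe, by ring⟩
        have hq : ((sP:ℝ), (0:ℝ)) ∈
            convexHull ℝ {((x:ℝ), t₀), (ys x t₀, (0:ℝ)), (yS x t₀, (0:ℝ))} := by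
          rw [← he]
          exact hull_two (subset_convexHull ℝ _ (by simp)) (subset_convexHull ℝ _ (by simp))
            hθ0 hθ1
        rw [← hkey]
        exact hull_two (subset_convexHull ℝ _ (by simp)) hq hμ0 hμ1
      · have hsRx : sR x = -(τs x t₀) := by simp only [hsRdef]; rw [if_pos hC]
        rw [hsRx] at h2
        have hτs0 := (hτs x t₀ hx ht0).1.1
        have hsPz : sP = 0 := le_antisymm (by linarith) hsP0
        have hτsz : τs x t₀ = 0 := le_antisymm (by linarith) hτs0
        have hcz : t₀ * a = b * x := by
          have hval : t₀ * a - b * x = sP * (t₀ - b) := by rw [hsP]; field_simp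
          rw [hsPz, zero_mul] at hval
          linarith
        have hkey2 : (1 - (t₀ - b) / t₀) • ((x:ℝ), t₀) + ((t₀ - b) / t₀) • ((0:ℝ), τs x t₀)
            = ((a:ℝ), b) := by
          simp only [Prod.smul_mk, Prod.mk_add_mk, smul_eq_mul, Prod.mk.injEq]
          constructor
          · field_simp
            linarith
          · rw [hτsz]; field_simp; ring
        rw [← hkey2]
        exact hull_two (subset_convexHull ℝ _ (by simp)) (subset_convexHull ℝ _ (by simp))
          hμ0 hμ1
      · have hsRx : sR x = yS x t₀ := by simp only [hsRdef]; rw [if_neg hC]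
        rw [hsRx] at h2
        obtain ⟨θ, hθ0, hθ1, hθe⟩ := exists_theta hsP0 h2
        have he : (1 - θ) • ((0:ℝ), (0:ℝ)) + θ • (yS x t₀, (0:ℝ)) = ((sP:ℝ), (0:ℝ)) := by
          simp only [Prod.smul_mk, Prod.mk_add_mk, smul_eq_mul, Prod.mk.injEq]
          exact ⟨hθe, by ring⟩
        have hq : ((sP:ℝ), (0:ℝ)) ∈ convexHull ℝ
            {((x:ℝ), t₀), (yS x t₀, (0:ℝ)), ((0:ℝ), τS x t₀), ((0:ℝ), (0:ℝ))} := by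
          rw [← he]
          exact hull_two (subset_convexHull ℝ _ (by simp)) (subset_convexHull ℝ _ (by simp))
            hθ0 hθ1
        rw [← hkey]
        exact hull_two (subset_convexHull ℝ _ (by simp)) hq hμ0 hμ1
    have hmem2 : ∀ x, 0 ≤ x → t₀ * a - b * x < 0 →
        sL x ≤ (a * t₀ - b * x) / (x - a) → (a * t₀ - b * x) / (x - a) ≤ sR x →
        (a, b) ∈ charTriangle Fm Gm ys yS τs τS x t₀ := by
      intro x hx hc h1 h2
      have hbx : 0 < b * x := by nlinarith
      have hbpos : 0 < b := by
        rcases hb0.lt_or_eq with h | h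
        · exact h
        · exfalso; rw [← h] at hbx; simp at hbx
      have hxpos : 0 < x := by
        rcases hx.lt_or_eq with h | h
        · exact h
        · exfalso; rw [← h] at hbx; simp at hbx
      have hxa : 0 < x - a := by nlinarith [mul_lt_mul_of_pos_right hbt hxpos]
      set τ := (b * x - a * t₀) / (x - a) with hτdef
      have hsPτ : (a * t₀ - b * x) / (x - a) = -τ := by
        rw [hτdef, ← neg_div]; ring_nf
      have hτpos : 0 < τ := div_pos (by linarith) hxa
      have hτleb : τ ≤ b := by
        rw [hτdef, div_le_iff₀ hxa]; nlinarith
      have hν0 : 0 ≤ (x - a) / x := div_nonneg hxa.le hxpos.le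
      have hν1 : (x - a) / x ≤ 1 := by rw [div_le_one hxpos]; linarith
      have hkey : (1 - (x - a) / x) • ((x:ℝ), t₀) + ((x - a) / x) • ((0:ℝ), τ) = ((a:ℝ), b) := by
        simp only [Prod.smul_mk, Prod.mk_add_mk, smul_eq_mul, Prod.mk.injEq]
        constructor
        · field_simp; ring
        · rw [hτdef]; field_simp; ring
      rw [hsPτ] at h1 h2
      unfold charTriangle
      split_ifs with hA hB hC
      · exact absurd hA.1 hxpos.ne'
      · exfalso
        have hsLx : sL x = ys x t₀ := by simp only [hsLdef]; rw [if_pos hB]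
        have hys0 := (hys x t₀ hx ht0).1.1
        rw [hsLx] at h1
        linarith
      · have hsLx : sL x = -(τS x t₀) := by simp only [hsLdef]; rw [if_neg (not_lt.2 hC.le)]
        have hsRx : sR x = -(τs x t₀) := by simp only [hsRdef]; rw [if_pos hC]
        rw [hsLx] at h1
        rw [hsRx] at h2
        obtain ⟨θ, hθ0, hθ1, hθe⟩ := exists_theta (show τs x t₀ ≤ τ by linarith)
          (show τ ≤ τS x t₀ by linarith)
        have he : (1 - θ) • ((0:ℝ), τs x t₀) + θ • ((0:ℝ), τS x t₀) = ((0:ℝ), τ) := by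
          simp only [Prod.smul_mk, Prod.mk_add_mk, smul_eq_mul, Prod.mk.injEq]
          exact ⟨by ring, hθe⟩
        have hq : ((0:ℝ), τ) ∈
            convexHull ℝ {((x:ℝ), t₀), ((0:ℝ), τs x t₀), ((0:ℝ), τS x t₀)} := by
          rw [← he]
          exact hull_two (subset_convexHull ℝ _ (by simp)) (subset_convexHull ℝ _ (by simp))
            hθ0 hθ1
        rw [← hkey]
        exact hull_two (subset_convexHull ℝ _ (by simp)) hq hν0 hν1
      · have hsLx : sL x = -(τS x t₀) := by simp only [hsLdef]; rw [if_neg hB]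
        rw [hsLx] at h1
        obtain ⟨θ, hθ0, hθ1, hθe⟩ := exists_theta hτpos.le (show τ ≤ τS x t₀ by linarith)
        have he : (1 - θ) • ((0:ℝ), (0:ℝ)) + θ • ((0:ℝ), τS x t₀) = ((0:ℝ), τ) := by
          simp only [Prod.smul_mk, Prod.mk_add_mk, smul_eq_mul, Prod.mk.injEq]
          exact ⟨by ring, hθe⟩
        have hq : ((0:ℝ), τ) ∈ convexHull ℝ
            {((x:ℝ), t₀), (yS x t₀, (0:ℝ)), ((0:ℝ), τS x t₀), ((0:ℝ), (0:ℝ))} := by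
          rw [← he]
          exact hull_two (subset_convexHull ℝ _ (by simp)) (subset_convexHull ℝ _ (by simp))
            hθ0 hθ1
        rw [← hkey]
        exact hull_two (subset_convexHull ℝ _ (by simp)) hq hν0 hν1
    have hmemV : ∀ bb : ℝ, 0 ≤ bb → bb ≤ t₀ → (Gm 0 t₀ < Fm 0 t₀ → τs 0 t₀ ≤ bb) →
        ((0:ℝ), bb) ∈ charTriangle Fm Gm ys yS τs τS 0 t₀ := by
      intro bb hbb0 hbbt hcond
      unfold charTriangle
      split_ifs with hA hB hC
      · obtain ⟨θ, hθ0, hθ1, hθe⟩ := exists_theta hbb0 hbbt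
        have he : (1 - θ) • ((0:ℝ), (0:ℝ)) + θ • ((0:ℝ), t₀) = ((0:ℝ), bb) := by
          simp only [Prod.smul_mk, Prod.mk_add_mk, smul_eq_mul, Prod.mk.injEq]
          exact ⟨by ring, hθe⟩
        rw [← he]
        exact hull_two (subset_convexHull ℝ _ (by simp)) (subset_convexHull ℝ _ (by simp))
          hθ0 hθ1
      · exact absurd ⟨rfl, hB⟩ hA
      · obtain ⟨θ, hθ0, hθ1, hθe⟩ := exists_theta (hcond hC) hbbt
        have he : (1 - θ) • ((0:ℝ), τs 0 t₀) + θ • ((0:ℝ), t₀) = ((0:ℝ), bb) := by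
          simp only [Prod.smul_mk, Prod.mk_add_mk, smul_eq_mul, Prod.mk.injEq]
          exact ⟨by ring, hθe⟩
        rw [← he]
        exact hull_two (subset_convexHull ℝ _ (by simp)) (subset_convexHull ℝ _ (by simp))
          hθ0 hθ1
      · obtain ⟨θ, hθ0, hθ1, hθe⟩ := exists_theta hbb0 hbbt
        have he : (1 - θ) • ((0:ℝ), (0:ℝ)) + θ • ((0:ℝ), t₀) = ((0:ℝ), bb) := by
          simp only [Prod.smul_mk, Prod.mk_add_mk, smul_eq_mul, Prod.mk.injEq]
          exact ⟨by ring, hθe⟩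
        rw [← he]
        exact hull_two (subset_convexHull ℝ _ (by simp)) (subset_convexHull ℝ _ (by simp))
          hθ0 hθ1
    set p : ℝ → ℝ := fun x => if a = 0 ∧ 0 < b then -b else
      (if 0 ≤ t₀ * a - b * x then (t₀ * a - b * x) / (t₀ - b) else (a * t₀ - b * x) / (x - a))
      with hpdef
    have hmemAll : ∀ x, 0 ≤ x → sL x ≤ p x → p x ≤ sR x →
        (a, b) ∈ charTriangle Fm Gm ys yS τs τS x t₀ := by
      intro x hx hL hR
      by_cases hab0 : a = 0 ∧ 0 < b
      · have hpx : p x = -b := by simp only [hpdef]; rw [if_pos hab0]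
        rw [hpx] at hL hR
        rcases hx.lt_or_eq with hx0 | hx0
        · have hc : t₀ * a - b * x < 0 := by
            rw [hab0.1]; nlinarith [hab0.2]
          have hsPe : (a * t₀ - b * x) / (x - a) = -b := by
            rw [hab0.1]; field_simp; ring
          exact hmem2 x hx hc (by rw [hsPe]; exact hL) (by rw [hsPe]; exact hR)
        · rw [hab0.1, ← hx0]
          refine hmemV b hb0 hbt₀ fun hGF => ?_
          have hsRx : sR 0 = -(τs 0 t₀) := by simp only [hsRdef]; rw [if_pos hGF]
          rw [← hx0, hsRx] at hR
          linarith
      · have hpx : p x = if 0 ≤ t₀ * a - b * x then (t₀ * a - b * x) / (t₀ - b)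
            else (a * t₀ - b * x) / (x - a) := by
          simp only [hpdef]; rw [if_neg hab0]
        by_cases hc : 0 ≤ t₀ * a - b * x
        · rw [hpx, if_pos hc] at hL hR
          exact hmem1 x hx hc (Or.inr hL) hR
        · rw [hpx, if_neg hc] at hL hR
          exact hmem2 x hx (lt_of_not_ge hc) hL hR
    have hbalt : ¬(a = 0 ∧ 0 < b) → b = 0 ∨ (0 < a ∧ 0 < b) := by
      intro hab0
      rcases hb0.lt_or_eq with h | h
      · right
        rcases ha.lt_or_eq with h' | h'
        · exact ⟨h', h⟩
        · exact absurd ⟨h'.symm, h⟩ hab0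
      · left; exact h.symm
    have hpanti : ∀ x1 x2, 0 ≤ x1 → x1 ≤ x2 → p x2 ≤ p x1 := by
      intro x1 x2 hx1 h12
      by_cases hab0 : a = 0 ∧ 0 < b
      · simp only [hpdef]; rw [if_pos hab0, if_pos hab0]
      · simp only [hpdef]; rw [if_neg hab0, if_neg hab0]
        rcases hbalt hab0 with hb' | ⟨hapos, hbpos⟩
        · rw [hb']
          simp only [zero_mul, sub_zero]
          rw [if_pos (by positivity), if_pos (by positivity)]
        · have hx2 : 0 ≤ x2 := le_trans hx1 h12
          by_cases hc2 : 0 ≤ t₀ * a - b * x2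
          · have hc1 : 0 ≤ t₀ * a - b * x1 := by nlinarith
            rw [if_pos hc1, if_pos hc2]
            rw [div_le_div_iff₀ htb htb]
            nlinarith [mul_nonneg (mul_nonneg hbpos.le (sub_nonneg.2 h12)) htb.le]
          · push_neg at hc2
            have hbx2 : 0 < b * x2 := by nlinarith
            have hx2pos : 0 < x2 := by
              rcases hx2.lt_or_eq with h | h
              · exact h
              · exfalso; rw [← h] at hbx2; simp at hbx2
            have hx2a : 0 < x2 - a := by nlinarith [mul_lt_mul_of_pos_right hbt hx2pos]
            have hneg2 : (a * t₀ - b * x2) / (x2 - a) < 0 :=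
              div_neg_of_neg_of_pos (by nlinarith) hx2a
            by_cases hc1 : 0 ≤ t₀ * a - b * x1
            · rw [if_pos hc1, if_neg (not_le.2 hc2)]
              have : 0 ≤ (t₀ * a - b * x1) / (t₀ - b) := div_nonneg hc1 htb.le
              linarith
            · push_neg at hc1
              rw [if_neg (not_le.2 hc2), if_neg (not_le.2 hc1)]
              have hbx1 : 0 < b * x1 := by nlinarith
              have hx1pos : 0 < x1 := by
                rcases hx1.lt_or_eq with h | h
                · exact h
                · exfalso; rw [← h] at hbx1; simp at hbx1
              have hx1a : 0 < x1 - a := by nlinarith [mul_lt_mul_of_pos_right hbt hx1pos]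
              rw [div_le_div_iff₀ hx2a hx1a]
              nlinarith [mul_nonneg (mul_nonneg hapos.le htb.le) (sub_nonneg.2 h12)]
    have hpcont : ∀ xb, 0 ≤ xb → ∀ z : ℕ → ℝ, (∀ n, 0 ≤ z n) → Tendsto z atTop (𝓝 xb) →
        Tendsto (fun n => p (z n)) atTop (𝓝 (p xb)) := by
      intro xb hxb z hz0 hz
      by_cases hab0 : a = 0 ∧ 0 < b
      · simp only [hpdef, if_pos hab0]
        exact tendsto_const_nhds
      · rcases hbalt hab0 with hb' | ⟨hapos, hbpos⟩
        · have hval : ∀ x : ℝ, p x = t₀ * a / (t₀ - b) := by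
            intro x
            simp only [hpdef]
            rw [if_neg hab0, hb']
            simp only [zero_mul, sub_zero]
            rw [if_pos (by positivity)]
          simp only [hval]
          exact tendsto_const_nhds
        · rcases lt_trichotomy xb (t₀ * a / b) with hlt | heq | hgt
          · have hev : ∀ᶠ n in atTop, (t₀ * a - b * z n) / (t₀ - b) = p (z n) := by
              filter_upwards [hz.eventually (eventually_lt_nhds hlt)] with n hn
              have h' : z n * b < t₀ * a := (lt_div_iff₀ hbpos).1 hn
              simp only [hpdef]
              rw [if_neg hab0, if_pos (by nlinarith)]
            have hxbeq : p xb = (t₀ * a - b * xb) / (t₀ - b) := by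
              have h' : xb * b < t₀ * a := (lt_div_iff₀ hbpos).1 hlt
              simp only [hpdef]
              rw [if_neg hab0, if_pos (by nlinarith)]
            rw [hxbeq]
            exact Tendsto.congr' hev
              ((tendsto_const_nhds.sub (hz.const_mul b)).div_const (t₀ - b))
          · have hcz : t₀ * a - b * xb = 0 := by rw [heq]; field_simp; ring
            have hpxb : p xb = 0 := by
              simp only [hpdef]
              rw [if_neg hab0, if_pos (le_of_eq hcz.symm), hcz, zero_div]
            rw [hpxb, tendsto_zero_iff_abs_tendsto_zero]
            have hxa : a < xb := by
              rw [heq, lt_div_iff₀ hbpos]; nlinarith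
            set C := max (1 / (t₀ - b)) (2 / (xb - a)) with hC
            have hC1 : 1 / (t₀ - b) ≤ C := le_max_left _ _
            have hC2 : 2 / (xb - a) ≤ C := le_max_right _ _
            have hev2 : ∀ᶠ n in atTop, (xb + a) / 2 < z n :=
              hz.eventually (eventually_gt_nhds (by linarith))
            refine squeeze_zero' (g := fun n => C * |t₀ * a - b * z n|)
              (Eventually.of_forall fun n => abs_nonneg _) ?_ ?_
            · filter_upwards [hev2] with n hn
              simp only [Function.comp_apply]
              have hzn_a : (xb - a) / 2 < z n - a := by linarith
              have hd : 0 < z n - a := by linarith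
              simp only [hpdef]
              rw [if_neg hab0]
              by_cases hcn : 0 ≤ t₀ * a - b * z n
              · rw [if_pos hcn, abs_div, abs_of_pos htb]
                have he1 : |t₀ * a - b * z n| / (t₀ - b)
                    = 1 / (t₀ - b) * |t₀ * a - b * z n| := by ring
                rw [he1]
                exact mul_le_mul_of_nonneg_right hC1 (abs_nonneg _)
              · rw [if_neg hcn, abs_div, abs_of_pos hd]
                have he0 : |a * t₀ - b * z n| = |t₀ * a - b * z n| := by rw [mul_comm a t₀]
                rw [he0, div_le_iff₀ hd]
                have hkey : 1 ≤ 2 / (xb - a) * (z n - a) := by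
                  rw [div_mul_eq_mul_div, le_div_iff₀ (by linarith : (0:ℝ) < xb - a)]
                  linarith
                nlinarith [abs_nonneg (t₀ * a - b * z n),
                  mul_le_mul_of_nonneg_left hkey (abs_nonneg (t₀ * a - b * z n)),
                  mul_le_mul_of_nonneg_right hC2 (mul_nonneg (abs_nonneg (t₀ * a - b * z n)) hd.le)]
            · have h0 : Tendsto (fun n => t₀ * a - b * z n) atTop (𝓝 0) := by
                have := tendsto_const_nhds (x := t₀ * a) (f := atTop (α := ℕ)).sub (hz.const_mul b)
                rw [← hcz]
                exact tendsto_const_nhds.sub (hz.const_mul b)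
              simpa using h0.abs.const_mul C
          · have hxa : 0 < xb - a := by
              have h' : a ≤ t₀ * a / b := by
                rw [le_div_iff₀ hbpos]; nlinarith
              linarith
            have hev : ∀ᶠ n in atTop, (a * t₀ - b * z n) / (z n - a) = p (z n) := by
              filter_upwards [hz.eventually (eventually_gt_nhds hgt)] with n hn
              have h' : t₀ * a < b * z n := by
                rw [div_lt_iff₀ hbpos] at hn; nlinarith
              simp only [hpdef]
              rw [if_neg hab0, if_neg (by linarith)]
            have hxbeq : p xb = (a * t₀ - b * xb) / (xb - a) := by
              have h' : t₀ * a < b * xb := by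
                rw [div_lt_iff₀ hbpos] at hgt; nlinarith
              simp only [hpdef]
              rw [if_neg hab0, if_neg (by linarith)]
            rw [hxbeq]
            refine Tendsto.congr' hev ?_
            exact Tendsto.div (tendsto_const_nhds.sub (hz.const_mul b))
              (hz.sub tendsto_const_nhds) (by linarith)
    by_cases h0X : sL 0 ≤ p 0
    · set X : Set ℝ := {x | 0 ≤ x ∧ sL x ≤ p x} with hXdef
      have h0mem : (0:ℝ) ∈ X := ⟨le_rfl, h0X⟩
      have hXBdd : BddAbove X := by
        refine ⟨t₀ * M + max (p 0) 0 + 1, fun x hx => ?_⟩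
        by_contra hgt
        push_neg at hgt
        have hx0 := hx.1
        have hxM : t₀ * M < x := by
          have := le_max_right (p 0) (0:ℝ)
          linarith
        have h1 := hLB x hxM _ (hsLmin x hx0)
        have h2 : p x ≤ p 0 := hpanti 0 x le_rfl hx0
        have h3 := hx.2
        have := le_max_left (p 0) (0:ℝ)
        linarith
      set xb := sSup X with hxbdef
      have hxb0 : 0 ≤ xb := le_csSup hXBdd h0mem
      have hXdc : ∀ y ∈ X, ∀ x', 0 ≤ x' → x' ≤ y → x' ∈ X := by
        intro y hy x' hx'0 hx'y
        refine ⟨hx'0, ?_⟩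
        rcases eq_or_lt_of_le hx'y with h | h
        · rw [h]; exact hy.2
        · have h1 : sL x' ≤ sR x' := hsLR x' hx'0
          have h2 : sR x' ≤ sL y := hmono x' y _ _ hx'0 h (hsRmin x' hx'0) (hsLmin y hy.1)
          have h3 : p y ≤ p x' := hpanti x' y hx'0 hx'y
          have h4 := hy.2
          linarith
      by_cases hcase : sL xb ≤ p xb
      · by_cases hRc : p xb ≤ sR xb
        · exact Set.mem_biUnion (Set.mem_Ici.2 hxb0) (hmemAll xb hxb0 hcase hRc)
        · exfalso
          push_neg at hRc
          set z : ℕ → ℝ := fun n => xb + 1 / (n + 1) with hzdef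
          have hzpos : ∀ n : ℕ, (0:ℝ) < 1 / ((n:ℝ) + 1) := fun n => by positivity
          have hz0 : ∀ n, 0 ≤ z n := fun n => by
            simp only [hzdef]; linarith [hzpos n]
          have hzgtxb : ∀ n, xb < z n := fun n => by
            simp only [hzdef]; linarith [hzpos n]
          have hztend : Tendsto z atTop (𝓝 xb) := by
            have h1 := tendsto_const_nhds (x := xb) (f := atTop (α := ℕ))
            have h2 := h1.add tendsto_one_div_add_atTop_nhds_zero_nat
            rw [add_zero] at h2
            exact h2
          have hzgt : ∀ n, p (z n) < sL (z n) := by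
            intro n
            by_contra hle
            push_neg at hle
            have hmem : z n ∈ X := ⟨hz0 n, hle⟩
            exact absurd (le_csSup hXBdd hmem) (not_le.2 (hzgtxb n))
          set s : ℕ → ℝ := fun n => sL (z n) with hsdef
          have hsmin : ∀ n, H (s n) (z n) = Hm (z n) := fun n => hsLmin _ (hz0 n)
          have hsanti : Antitone s := by
            intro n m hnm
            have hzz : z m ≤ z n := by
              simp only [hzdef]
              have : (1:ℝ) / ((m:ℝ) + 1) ≤ 1 / ((n:ℝ) + 1) := by
                apply one_div_le_one_div_of_le (by positivity)
                have : (n:ℝ) ≤ (m:ℝ) := Nat.cast_le.2 hnm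
                linarith
              linarith
            rcases eq_or_lt_of_le hzz with h | h
            · simp only [hsdef]; rw [h]
            · exact hmono (z m) (z n) _ _ (hz0 m) h (hsmin m) (hsmin n)
          have hsbdd : BddBelow (Set.range s) := by
            refine ⟨sR xb, ?_⟩
            rintro _ ⟨n, rfl⟩
            exact hmono xb (z n) _ _ hxb0 (hzgtxb n) (hsRmin xb hxb0) (hsmin n)
          have hstend : Tendsto s atTop (𝓝 (⨅ n, s n)) := tendsto_atTop_ciInf hsanti hsbdd
          have hinf_min : H (⨅ n, s n) xb = Hm xb := hlim xb hxb0 z s hz0 hztend hsmin _ hstend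
          have h1 : (⨅ n, s n) ≤ sR xb := hsRgreatest xb hxb0 _ hinf_min
          have hptend := hpcont xb hxb0 z hz0 hztend
          have h2 : p xb ≤ ⨅ n, s n :=
            le_of_tendsto_of_tendsto' hptend hstend fun n => (hzgt n).le
          linarith
      · push_neg at hcase
        have hxbpos : 0 < xb := by
          rcases hxb0.lt_or_eq with h | h
          · exact h
          · exfalso; rw [← h] at hcase; linarith
        set z : ℕ → ℝ := fun n => max (xb - 1 / (n + 1)) 0 with hzdef
        have hzpos : ∀ n : ℕ, (0:ℝ) < 1 / ((n:ℝ) + 1) := fun n => by positivity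
        have hz0 : ∀ n, 0 ≤ z n := fun n => le_max_right _ _
        have hzlt : ∀ n, z n < xb := by
          intro n
          simp only [hzdef]
          exact max_lt (by linarith [hzpos n]) hxbpos
        have hzmem : ∀ n, z n ∈ X := by
          intro n
          obtain ⟨y, hyX, hy⟩ := exists_lt_of_lt_csSup ⟨0, h0mem⟩ (hzlt n)
          exact hXdc y hyX _ (hz0 n) hy.le
        have hztend : Tendsto z atTop (𝓝 xb) := by
          have h1 : Tendsto (fun n : ℕ => xb - 1 / ((n:ℝ) + 1)) atTop (𝓝 (xb - 0)) :=
            tendsto_const_nhds.sub tendsto_one_div_add_atTop_nhds_zero_nat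
          have h2 := h1.max (tendsto_const_nhds (x := (0:ℝ)))
          rw [sub_zero, max_eq_left hxb0] at h2
          exact h2
        set s : ℕ → ℝ := fun n => sR (z n) with hsdef
        have hsmin : ∀ n, H (s n) (z n) = Hm (z n) := fun n => hsRmin _ (hz0 n)
        have hsmono : Monotone s := by
          intro n m hnm
          have hzz : z n ≤ z m := by
            simp only [hzdef]
            have : (1:ℝ) / ((m:ℝ) + 1) ≤ 1 / ((n:ℝ) + 1) := by
              apply one_div_le_one_div_of_le (by positivity)
              have : (n:ℝ) ≤ (m:ℝ) := Nat.cast_le.2 hnm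
              linarith
            exact max_le_max (by linarith) le_rfl
          rcases eq_or_lt_of_le hzz with h | h
          · simp only [hsdef]; rw [h]
          · exact hmono (z n) (z m) _ _ (hz0 n) h (hsmin n) (hsmin m)
        have hsbdd : BddAbove (Set.range s) := by
          refine ⟨sL xb, ?_⟩
          rintro _ ⟨n, rfl⟩
          exact hmono (z n) xb _ _ (hz0 n) (hzlt n) (hsmin n) (hsLmin xb hxb0)
        have hstend : Tendsto s atTop (𝓝 (⨆ n, s n)) := tendsto_atTop_ciSup hsmono hsbdd
        have hsup_min : H (⨆ n, s n) xb = Hm xb := hlim xb hxb0 z s hz0 hztend hsmin _ hstend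
        have h1 : sL xb ≤ ⨆ n, s n := hsLleast xb hxb0 _ hsup_min
        have hptend := hpcont xb hxb0 z hz0 hztend
        have hev : ∀ᶠ n in atTop, p (z n) < s n := by
          have hd : Tendsto (fun n => s n - p (z n)) atTop (𝓝 ((⨆ n, s n) - p xb)) :=
            hstend.sub hptend
          have hpos : 0 < (⨆ n, s n) - p xb := by linarith
          filter_upwards [hd.eventually (eventually_gt_nhds hpos)] with n hn
          linarith
        obtain ⟨n, hn⟩ := hev.exists
        exact Set.mem_biUnion (Set.mem_Ici.2 (hz0 n))
          (hmemAll (z n) (hz0 n) (hzmem n).2 hn.le)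
    · push_neg at h0X
      by_cases hab0 : a = 0 ∧ 0 < b
      · refine Set.mem_biUnion (Set.mem_Ici.2 le_rfl) ?_
        rw [hab0.1]
        refine hmemV b hb0 hbt₀ fun hGF => ?_
        have hsL0 : sL 0 = -(τS 0 t₀) := by
          simp only [hsLdef]; rw [if_neg (not_lt.2 hGF.le)]
        have hp0 : p 0 = -b := by simp only [hpdef]; rw [if_pos hab0]
        have hτsS : τs 0 t₀ ≤ τS 0 t₀ := (hτs 0 t₀ le_rfl ht0).2 _ (hτS 0 t₀ le_rfl ht0).1
        rw [hsL0, hp0] at h0X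
        linarith
      · have hc0 : 0 ≤ t₀ * a - b * 0 := by nlinarith
        have hp0 : p 0 = (t₀ * a - b * 0) / (t₀ - b) := by
          simp only [hpdef]; rw [if_neg hab0, if_pos hc0]
        refine Set.mem_biUnion (Set.mem_Ici.2 le_rfl) ?_
        refine hmem1 0 le_rfl hc0 (Or.inl rfl) ?_
        have h1 := hsLR 0 le_rfl
        rw [hp0] at h0X
        linarith
end

section
/- Let x′, x″ ≥ 0 and t′, t″ > 0 be arbitrary, let τ′ be any minimizer of τ ↦ G(τ,x′,t′) over [0,∞) and let τ″ be any minimizer of τ ↦ G(τ,x″,t″) over [0,∞). Then (x″ − x′)·∫_{τ′}^{τ″} ρ_b(η) u_b(η) dη ≤ (t″ − t′)·∫_{τ′}^{τ″} ρ_b(η) u_b(η)² dη, where the integrals are oriented (i.e., ∫_{τ′}^{τ″} = −∫_{τ″}^{τ′} if τ″ < τ′). In particular, if t′ < t″ and τ′ < τ″, then (x″ − x′)/(t″ − t′) ≤ (∫_{τ′}^{τ″} ρ_b u_b² dη)/(∫_{τ′}^{τ″} ρ_b u_b dη). -/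
open MeasureTheory Set Filter

lemma aux_intg (F : ℝ → ℝ) (hF : Measurable F)
    (hbd : ∀ K : ℝ, ∃ M : ℝ, ∀ η ∈ Set.Icc (0:ℝ) K, |F η| ≤ M)
    (a b : ℝ) (ha : 0 ≤ a) (hb : 0 ≤ b) :
    IntervalIntegrable F MeasureTheory.volume a b := by
  obtain ⟨M, hM⟩ := hbd (max a b)
  rw [intervalIntegrable_iff]
  apply Measure.integrableOn_of_bounded (M := M) measure_Ioc_lt_top.ne
    hF.aestronglyMeasurable
  filter_upwards [MeasureTheory.ae_restrict_mem measurableSet_uIoc] with η hη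
  exact hM η ⟨le_trans (le_min ha hb) (le_of_lt hη.1), hη.2⟩

theorem stmt13
    (ρ0 u0 ρb ub : ℝ → ℝ)
    (hρ0meas : Measurable ρ0) (hu0meas : Measurable u0)
    (hρbmeas : Measurable ρb) (hubmeas : Measurable ub)
    (hρ0pos : ∀ η, 0 ≤ η → 0 < ρ0 η)
    (hρbpos : ∀ η, 0 ≤ η → 0 < ρb η)
    (hubpos : ∀ η, 0 ≤ η → 0 < ub η)
    (hρ0loc : ∀ K : ℝ, ∃ M : ℝ, ∀ η ∈ Set.Icc (0:ℝ) K, ρ0 η ≤ M)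
    (hρbloc : ∀ K : ℝ, ∃ M : ℝ, ∀ η ∈ Set.Icc (0:ℝ) K, ρb η ≤ M)
    (hu0bdd : ∃ M : ℝ, ∀ η, 0 ≤ η → |u0 η| ≤ M)
    (hubbdd : ∃ M : ℝ, ∀ η, 0 ≤ η → |ub η| ≤ M)
    (x' x'' t' t'' τ' τ'' : ℝ)
    (hx' : 0 ≤ x') (hx'' : 0 ≤ x'') (ht' : 0 < t') (ht'' : 0 < t'')
    (hτ' : MinimizesOn (fun τ => Gpot ρb ub τ x' t') τ')
    (hτ'' : MinimizesOn (fun τ => Gpot ρb ub τ x'' t'') τ'') :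
    (x'' - x') * (∫ η in τ'..τ'', ρb η * ub η) ≤
      (t'' - t') * (∫ η in τ'..τ'', ρb η * ub η ^ 2) ∧
    (t' < t'' → τ' < τ'' →
      (x'' - x') / (t'' - t') ≤
        (∫ η in τ'..τ'', ρb η * ub η ^ 2) / (∫ η in τ'..τ'', ρb η * ub η)) := by
  obtain ⟨Mu, hMu⟩ := hubbdd
  have hMu0 : 0 ≤ Mu := le_trans (abs_nonneg _) (hMu 0 le_rfl)
  -- boundedness facts
  have hbd_g : ∀ K : ℝ, ∃ M : ℝ, ∀ η ∈ Set.Icc (0:ℝ) K, |ρb η * ub η| ≤ M := by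
    intro K
    obtain ⟨Mρ, hMρ⟩ := hρbloc K
    refine ⟨Mρ * Mu, fun η hη => ?_⟩
    have h1 : |ρb η| ≤ Mρ := by
      rw [abs_of_pos (hρbpos η hη.1)]; exact hMρ η hη
    rw [abs_mul]
    exact mul_le_mul h1 (hMu η hη.1) (abs_nonneg _) (le_trans (abs_nonneg _) h1)
  have hbd_h : ∀ K : ℝ, ∃ M : ℝ, ∀ η ∈ Set.Icc (0:ℝ) K, |ρb η * ub η ^ 2| ≤ M := by
    intro K
    obtain ⟨Mρ, hMρ⟩ := hρbloc K
    refine ⟨Mρ * Mu ^ 2, fun η hη => ?_⟩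
    have h1 : |ρb η| ≤ Mρ := by
      rw [abs_of_pos (hρbpos η hη.1)]; exact hMρ η hη
    have h2 : |ub η ^ 2| ≤ Mu ^ 2 := by
      rw [abs_pow]
      exact pow_le_pow_left₀ (abs_nonneg _) (hMu η hη.1) 2
    rw [abs_mul]
    exact mul_le_mul h1 h2 (abs_nonneg _) (le_trans (abs_nonneg _) h1)
  have hbd_k : ∀ K : ℝ, ∃ M : ℝ, ∀ η ∈ Set.Icc (0:ℝ) K, |η * (ρb η * ub η ^ 2)| ≤ M := by
    intro K
    obtain ⟨M, hM⟩ := hbd_h K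
    refine ⟨|K| * M, fun η hη => ?_⟩
    have h1 : |η| ≤ |K| := by
      rw [abs_of_nonneg hη.1]
      exact le_trans hη.2 (le_abs_self K)
    rw [abs_mul]
    exact mul_le_mul h1 (hM η hη) (abs_nonneg _) (abs_nonneg _)
  -- integrability
  have hmeas_g : Measurable fun η => ρb η * ub η := hρbmeas.mul hubmeas
  have hmeas_h : Measurable fun η => ρb η * ub η ^ 2 := hρbmeas.mul (hubmeas.pow_const 2)
  have hmeas_k : Measurable fun η => η * (ρb η * ub η ^ 2) := measurable_id.mul hmeas_h
  have hint_g : ∀ a b : ℝ, 0 ≤ a → 0 ≤ b →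
      IntervalIntegrable (fun η => ρb η * ub η) MeasureTheory.volume a b :=
    aux_intg _ hmeas_g hbd_g
  have hint_h : ∀ a b : ℝ, 0 ≤ a → 0 ≤ b →
      IntervalIntegrable (fun η => ρb η * ub η ^ 2) MeasureTheory.volume a b :=
    aux_intg _ hmeas_h hbd_h
  have hint_k : ∀ a b : ℝ, 0 ≤ a → 0 ≤ b →
      IntervalIntegrable (fun η => η * (ρb η * ub η ^ 2)) MeasureTheory.volume a b :=
    aux_intg _ hmeas_k hbd_k
  have hτ'0 : 0 ≤ τ' := hτ'.1
  have hτ''0 : 0 ≤ τ'' := hτ''.1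
  set A : ℝ := ∫ η in τ'..τ'', ρb η * ub η with hA
  set B : ℝ := ∫ η in τ'..τ'', ρb η * ub η ^ 2 with hB
  set C : ℝ := ∫ η in τ'..τ'', η * (ρb η * ub η ^ 2) with hC
  -- the difference of potentials
  have key : ∀ x t : ℝ,
      Gpot ρb ub τ'' x t - Gpot ρb ub τ' x t = x * A - t * B + C := by
    intro x t
    have hfun : (fun η => (x - ub η * (t - η)) * (ρb η * ub η)) =
        fun η => x * (ρb η * ub η) - t * (ρb η * ub η ^ 2) + η * (ρb η * ub η ^ 2) := by
      funext η; ring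
    have hint_f : ∀ a b : ℝ, 0 ≤ a → 0 ≤ b →
        IntervalIntegrable (fun η => (x - ub η * (t - η)) * (ρb η * ub η))
          MeasureTheory.volume a b := by
      intro a b ha hb
      rw [hfun]
      exact (((hint_g a b ha hb).const_mul x).sub ((hint_h a b ha hb).const_mul t)).add
        (hint_k a b ha hb)
    have hadd := intervalIntegral.integral_add_adjacent_intervals
      (hint_f 0 τ' le_rfl hτ'0) (hint_f τ' τ'' hτ'0 hτ''0)
    have hsplit : (∫ η in τ'..τ'', (x - ub η * (t - η)) * (ρb η * ub η)) =
        x * A - t * B + C := by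
      rw [hfun, intervalIntegral.integral_add
          (((hint_g τ' τ'' hτ'0 hτ''0).const_mul x).sub ((hint_h τ' τ'' hτ'0 hτ''0).const_mul t))
          (hint_k τ' τ'' hτ'0 hτ''0),
        intervalIntegral.integral_sub ((hint_g τ' τ'' hτ'0 hτ''0).const_mul x)
          ((hint_h τ' τ'' hτ'0 hτ''0).const_mul t),
        intervalIntegral.integral_const_mul, intervalIntegral.integral_const_mul]
    unfold Gpot
    rw [← hadd, hsplit]
    ring
  have h1 : Gpot ρb ub τ' x' t' ≤ Gpot ρb ub τ'' x' t' := hτ'.2 τ'' hτ''0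
  have h2 : Gpot ρb ub τ'' x'' t'' ≤ Gpot ρb ub τ' x'' t'' := hτ''.2 τ' hτ'0
  have k1 := key x' t'
  have k2 := key x'' t''
  have main : (x'' - x') * A ≤ (t'' - t') * B := by nlinarith
  refine ⟨main, fun htlt hτlt => ?_⟩
  have hApos : 0 < A := by
    apply intervalIntegral.intervalIntegral_pos_of_pos_on (hint_g τ' τ'' hτ'0 hτ''0)
      (fun η hη => mul_pos (hρbpos η (le_trans hτ'0 (le_of_lt hη.1)))
        (hubpos η (le_trans hτ'0 (le_of_lt hη.1)))) hτlt
  rw [div_le_div_iff₀ (by linarith) hApos]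
  nlinarith
end

section
/- Fix t > 0 and let 0 < x₁ < x₂. For any two points x < x′ in [x₁,x₂] the inequalities (x − x′)·m(x′,t) ≤ μ(x′,t) − μ(x,t) ≤ (x − x′)·m(x,t) hold, and consequently ∫_{x₁}^{x₂} m(x,t) dx = μ(x₁,t) − μ(x₂,t). -/
open MeasureTheory Set Filter

open Classical in
/-- The mass potential `m(x, t)`. -/
noncomputable def mpot (ρ0 ρb ub : ℝ → ℝ) (Fm Gm ys τs : ℝ → ℝ → ℝ) (x t : ℝ) : ℝ :=
  if Fm x t ≤ Gm x t ∧ 0 < x then ∫ η in (0:ℝ)..ys x t, ρ0 η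
  else - ∫ η in (0:ℝ)..τs x t, ρb η * ub η

open Classical in
/-- The momentum potential `q(x, t)`. -/
noncomputable def qpot (ρ0 u0 ρb ub : ℝ → ℝ) (Fm Gm ys τs : ℝ → ℝ → ℝ) (x t : ℝ) : ℝ :=
  if Fm x t ≤ Gm x t then ∫ η in (0:ℝ)..ys x t, ρ0 η * u0 η
  else - ∫ η in (0:ℝ)..τs x t, ρb η * ub η ^ 2

/-- `μ(x,t) = min (F(x,t), G(x,t))`. -/
noncomputable def μpot (Fm Gm : ℝ → ℝ → ℝ) (x t : ℝ) : ℝ := min (Fm x t) (Gm x t)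


lemma intervalIntegrable_of_bdd {f : ℝ → ℝ} (hf : Measurable f) {y C : ℝ} (hy : 0 ≤ y)
    (hC : ∀ η ∈ Set.Icc (0:ℝ) y, |f η| ≤ C) : IntervalIntegrable f volume 0 y := by
  rw [intervalIntegrable_iff, uIoc_of_le hy]
  apply Measure.integrableOn_of_bounded (M := C) (by simp) hf.aestronglyMeasurable
  filter_upwards [ae_restrict_mem measurableSet_Ioc] with η hη
  exact hC η (Ioc_subset_Icc_self hη)

lemma Fpot_translate {ρ0 u0 : ℝ → ℝ} (hρ0meas : Measurable ρ0) (hu0meas : Measurable u0)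
    (hρ0pos : ∀ η, 0 ≤ η → 0 < ρ0 η)
    (hρ0loc : ∀ K : ℝ, ∃ M : ℝ, ∀ η ∈ Set.Icc (0:ℝ) K, ρ0 η ≤ M)
    (hu0bdd : ∃ M : ℝ, ∀ η, 0 ≤ η → |u0 η| ≤ M)
    {y : ℝ} (hy : 0 ≤ y) (x x' t : ℝ) :
    Fpot ρ0 u0 y x' t = Fpot ρ0 u0 y x t + (x - x') * ∫ η in (0:ℝ)..y, ρ0 η := by
  obtain ⟨M, hM⟩ := hρ0loc y
  obtain ⟨Mu, hMu⟩ := hu0bdd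
  have hM0 : 0 ≤ M := le_trans (hρ0pos 0 le_rfl).le (hM 0 ⟨le_rfl, hy⟩)
  have hMu0 : 0 ≤ Mu := le_trans (abs_nonneg _) (hMu 0 le_rfl)
  have hρ0int : IntervalIntegrable ρ0 volume 0 y :=
    intervalIntegrable_of_bdd hρ0meas hy (fun η hη => by
      rw [abs_of_pos (hρ0pos η hη.1)]; exact hM η hη)
  have hFint : IntervalIntegrable (fun η => (t * u0 η + η - x) * ρ0 η) volume 0 y := by
    apply intervalIntegrable_of_bdd (C := (|t| * Mu + y + |x|) * M) (by fun_prop) hy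
    intro η hη
    rw [abs_mul, abs_of_pos (hρ0pos η hη.1)]
    apply mul_le_mul _ (hM η hη) (hρ0pos η hη.1).le (by positivity)
    have ha : |t * u0 η| ≤ |t| * Mu := by
      rw [abs_mul]; exact mul_le_mul_of_nonneg_left (hMu η hη.1) (abs_nonneg t)
    obtain ⟨ha1, ha2⟩ := abs_le.mp ha
    have hx1 := neg_abs_le x
    have hx2 := le_abs_self x
    rw [abs_le]
    constructor <;> [skip; skip] <;> · obtain ⟨h1, h2⟩ := hη; linarith
  unfold Fpot
  rw [← intervalIntegral.integral_const_mul, ← intervalIntegral.integral_add hFint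
    (hρ0int.const_mul (x - x'))]
  congr 1
  funext η
  ring

lemma Gpot_translate {ρb ub : ℝ → ℝ} (hρbmeas : Measurable ρb) (hubmeas : Measurable ub)
    (hρbpos : ∀ η, 0 ≤ η → 0 < ρb η)
    (hρbloc : ∀ K : ℝ, ∃ M : ℝ, ∀ η ∈ Set.Icc (0:ℝ) K, ρb η ≤ M)
    (hubbdd : ∃ M : ℝ, ∀ η, 0 ≤ η → |ub η| ≤ M)
    {τ : ℝ} (hτ : 0 ≤ τ) (x x' t : ℝ) :
    Gpot ρb ub τ x' t = Gpot ρb ub τ x t + (x' - x) * ∫ η in (0:ℝ)..τ, ρb η * ub η := by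
  obtain ⟨M, hM⟩ := hρbloc τ
  obtain ⟨Mu, hMu⟩ := hubbdd
  have hM0 : 0 ≤ M := le_trans (hρbpos 0 le_rfl).le (hM 0 ⟨le_rfl, hτ⟩)
  have hMu0 : 0 ≤ Mu := le_trans (abs_nonneg _) (hMu 0 le_rfl)
  have hprod : ∀ η ∈ Set.Icc (0:ℝ) τ, |ρb η * ub η| ≤ M * Mu := by
    intro η hη
    rw [abs_mul, abs_of_pos (hρbpos η hη.1)]
    exact mul_le_mul (hM η hη) (hMu η hη.1) (abs_nonneg _) hM0
  have hρbint : IntervalIntegrable (fun η => ρb η * ub η) volume 0 τ :=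
    intervalIntegrable_of_bdd (hρbmeas.mul hubmeas) hτ hprod
  have hGint : IntervalIntegrable (fun η => (x - ub η * (t - η)) * (ρb η * ub η)) volume 0 τ := by
    apply intervalIntegrable_of_bdd (C := (|x| + Mu * (|t| + τ)) * (M * Mu)) (by fun_prop) hτ
    intro η hη
    rw [abs_mul]
    apply mul_le_mul _ (hprod η hη) (abs_nonneg _)
      (add_nonneg (abs_nonneg x) (mul_nonneg hMu0 (add_nonneg (abs_nonneg t) hτ)))
    have ha : |ub η * (t - η)| ≤ Mu * (|t| + τ) := by
      rw [abs_mul]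
      apply mul_le_mul (hMu η hη.1) _ (abs_nonneg _) hMu0
      rw [abs_le]
      obtain ⟨h1, h2⟩ := hη
      constructor <;> [have := neg_abs_le t; have := le_abs_self t] <;> linarith
    obtain ⟨ha1, ha2⟩ := abs_le.mp ha
    have hx1 := neg_abs_le x
    have hx2 := le_abs_self x
    rw [abs_le]
    constructor <;> linarith
  unfold Gpot
  rw [← intervalIntegral.integral_const_mul, ← intervalIntegral.integral_add hGint
    (hρbint.const_mul (x' - x))]
  congr 1
  funext η
  ring

lemma integral_eq_of_key (m U : ℝ → ℝ) {x₁ x₂ : ℝ} (hx : x₁ < x₂)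
    (key : ∀ x x' : ℝ, x₁ ≤ x → x ≤ x' → x' ≤ x₂ →
      (x - x') * m x' ≤ U x' - U x ∧ U x' - U x ≤ (x - x') * m x) :
    (∫ x in x₁..x₂, m x) = U x₁ - U x₂ := by
  have hmono : ∀ a b, x₁ ≤ a → a ≤ b → b ≤ x₂ → m a ≤ m b := by
    intro a b ha hab hb
    rcases eq_or_lt_of_le hab with rfl | hlt
    · exact le_rfl
    · obtain ⟨h1, h2⟩ := key a b ha hab hb
      nlinarith
  have hintegrable : ∀ a b, x₁ ≤ a → a ≤ b → b ≤ x₂ → IntervalIntegrable m volume a b := by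
    intro a b ha hab hb
    apply MonotoneOn.intervalIntegrable
    rw [uIcc_of_le hab]
    intro u hu v hv huv
    exact hmono u v (ha.trans hu.1) huv (hv.2.trans hb)
  have hbound : ∀ a b, x₁ ≤ a → a ≤ b → b ≤ x₂ →
      (b - a) * m a ≤ (∫ x in a..b, m x) ∧ (∫ x in a..b, m x) ≤ (b - a) * m b := by
    intro a b ha hab hb
    constructor
    · have := intervalIntegral.integral_mono_on hab intervalIntegrable_const
        (hintegrable a b ha hab hb) (fun u hu => hmono a u ha hu.1 (hu.2.trans hb))
      simpa using this
    · have := intervalIntegral.integral_mono_on hab (hintegrable a b ha hab hb)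
        intervalIntegrable_const (fun u hu => hmono u b (ha.trans hu.1) hu.2 hb)
      simpa using this
  have hEbnd : ∀ n : ℕ, 0 < n →
      |(∫ x in x₁..x₂, m x) - (U x₁ - U x₂)| ≤ ((x₂ - x₁) / n) * (m x₂ - m x₁) := by
    intro n hn
    have hn' : (n:ℝ) ≠ 0 := Nat.cast_ne_zero.mpr hn.ne'
    have hnpos : (0:ℝ) < n := Nat.cast_pos.mpr hn
    set Δ : ℝ := (x₂ - x₁) / n with hΔdef
    have hΔ : 0 ≤ Δ := div_nonneg (by linarith) hnpos.le
    set z : ℕ → ℝ := fun i => x₁ + i * Δ with hzdef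
    have hz0 : z 0 = x₁ := by simp [hzdef]
    have hzn : z n = x₂ := by
      rw [hzdef]
      simp only
      rw [hΔdef]
      field_simp
      ring
    have hzsucc : ∀ i : ℕ, z (i + 1) = z i + Δ := by
      intro i; simp only [hzdef]; push_cast; ring
    have hzmem : ∀ i : ℕ, i ≤ n → x₁ ≤ z i ∧ z i ≤ x₂ := by
      intro i hi
      have h1 : (0:ℝ) ≤ (i:ℝ) * Δ := mul_nonneg (Nat.cast_nonneg i) hΔ
      have h2 : (i:ℝ) * Δ ≤ (n:ℝ) * Δ := mul_le_mul_of_nonneg_right (Nat.cast_le.mpr hi) hΔ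
      have h3 : (n:ℝ) * Δ = x₂ - x₁ := by rw [hΔdef]; field_simp
      constructor <;> simp only [hzdef] <;> linarith
    have hint : ∀ k < n, IntervalIntegrable m volume (z k) (z (k + 1)) := by
      intro k hk
      exact hintegrable _ _ (hzmem k hk.le).1 (by rw [hzsucc]; linarith) (hzmem (k + 1) hk).2
    have hsum2 : ∑ i ∈ Finset.range n, ∫ x in z i..z (i + 1), m x = ∫ x in x₁..x₂, m x := by
      rw [intervalIntegral.sum_integral_adjacent_intervals hint, hz0, hzn]
    have hsum1 : ∑ i ∈ Finset.range n, (U (z i) - U (z (i + 1))) = U x₁ - U x₂ := by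
      rw [Finset.sum_range_sub' (fun i => U (z i)) n, hz0, hzn]
    have heq : (∫ x in x₁..x₂, m x) - (U x₁ - U x₂) =
        ∑ i ∈ Finset.range n,
          ((∫ x in z i..z (i + 1), m x) - (U (z i) - U (z (i + 1)))) := by
      rw [Finset.sum_sub_distrib, hsum2, hsum1]
    rw [heq]
    calc |∑ i ∈ Finset.range n, ((∫ x in z i..z (i + 1), m x) - (U (z i) - U (z (i + 1))))|
        ≤ ∑ i ∈ Finset.range n, |(∫ x in z i..z (i + 1), m x) - (U (z i) - U (z (i + 1)))| :=
          Finset.abs_sum_le_sum_abs _ _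
      _ ≤ ∑ i ∈ Finset.range n, Δ * (m (z (i + 1)) - m (z i)) := by
          apply Finset.sum_le_sum
          intro i hi
          have hi' := Finset.mem_range.mp hi
          have hle : z i ≤ z (i + 1) := by rw [hzsucc]; linarith
          have h1 := (hzmem i hi'.le).1
          have h2 := (hzmem (i + 1) hi').2
          obtain ⟨hk1, hk2⟩ := key (z i) (z (i + 1)) h1 hle h2
          obtain ⟨hb1, hb2⟩ := hbound (z i) (z (i + 1)) h1 hle h2
          have hd1 : z (i + 1) - z i = Δ := by rw [hzsucc]; ring
          have hd2 : z i - z (i + 1) = -Δ := by rw [hzsucc]; ring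
          rw [hd2] at hk1 hk2
          rw [hd1] at hb1 hb2
          rw [abs_le]
          constructor <;> nlinarith
      _ = Δ * (m (z n) - m (z 0)) := by
          rw [← Finset.mul_sum, Finset.sum_range_sub (fun i => m (z i)) n]
      _ = ((x₂ - x₁) / n) * (m x₂ - m x₁) := by rw [hz0, hzn, hΔdef]
  have hC : 0 ≤ m x₂ - m x₁ := by
    have := hmono x₁ x₂ le_rfl hx.le le_rfl; linarith
  by_contra hne
  have hEpos : 0 < |(∫ x in x₁..x₂, m x) - (U x₁ - U x₂)| :=
    abs_pos.mpr (sub_ne_zero.mpr hne)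
  set E := |(∫ x in x₁..x₂, m x) - (U x₁ - U x₂)| with hE
  obtain ⟨n, hn⟩ := exists_nat_gt ((x₂ - x₁) * (m x₂ - m x₁) / E)
  have hn0 : 0 < n := by
    have h0 : (0:ℝ) ≤ (x₂ - x₁) * (m x₂ - m x₁) / E :=
      div_nonneg (mul_nonneg (by linarith) hC) hEpos.le
    exact_mod_cast Nat.cast_pos.mp (lt_of_le_of_lt h0 hn)
  have h1 := hEbnd n hn0
  have hnpos : (0:ℝ) < n := Nat.cast_pos.mpr hn0
  have h2 : ((x₂ - x₁) / n) * (m x₂ - m x₁) < E := by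
    rw [div_mul_eq_mul_div, div_lt_iff₀ hnpos]
    have h3 := (div_lt_iff₀ hEpos).mp hn
    nlinarith
  linarith

lemma key_ineq (ρ0 u0 ρb ub : ℝ → ℝ)
    (hρ0meas : Measurable ρ0) (hu0meas : Measurable u0)
    (hρbmeas : Measurable ρb) (hubmeas : Measurable ub)
    (hρ0pos : ∀ η, 0 ≤ η → 0 < ρ0 η)
    (hρbpos : ∀ η, 0 ≤ η → 0 < ρb η)
    (hρ0loc : ∀ K : ℝ, ∃ M : ℝ, ∀ η ∈ Set.Icc (0:ℝ) K, ρ0 η ≤ M)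
    (hρbloc : ∀ K : ℝ, ∃ M : ℝ, ∀ η ∈ Set.Icc (0:ℝ) K, ρb η ≤ M)
    (hu0bdd : ∃ M : ℝ, ∀ η, 0 ≤ η → |u0 η| ≤ M)
    (hubbdd : ∃ M : ℝ, ∀ η, 0 ≤ η → |ub η| ≤ M)
    (Fm Gm : ℝ → ℝ → ℝ)
    (hFm : ∀ x t, 0 ≤ x → 0 ≤ t → IsMinValue (fun y => Fpot ρ0 u0 y x t) (Fm x t))
    (hGm : ∀ x t, 0 ≤ x → 0 ≤ t → IsMinValue (fun τ => Gpot ρb ub τ x t) (Gm x t))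
    (ys τs : ℝ → ℝ → ℝ)
    (hys : ∀ x t, 0 ≤ x → 0 ≤ t → SmallestMinimizer (fun y => Fpot ρ0 u0 y x t) (ys x t))
    (hτs : ∀ x t, 0 ≤ x → 0 ≤ t → SmallestMinimizer (fun τ => Gpot ρb ub τ x t) (τs x t))
    {t : ℝ} (ht : 0 ≤ t) {x x' : ℝ} (hx0 : 0 < x) (hxx : x ≤ x') :
    (x - x') * mpot ρ0 ρb ub Fm Gm ys τs x' t ≤ μpot Fm Gm x' t - μpot Fm Gm x t ∧
      μpot Fm Gm x' t - μpot Fm Gm x t ≤ (x - x') * mpot ρ0 ρb ub Fm Gm ys τs x t := by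
  have hx'0 : 0 < x' := lt_of_lt_of_le hx0 hxx
  have hFval : ∀ z, 0 ≤ z → Fm z t = Fpot ρ0 u0 (ys z t) z t := by
    intro z hz
    have h1 := (hFm z t hz ht).2 (ys z t) (hys z t hz ht).1.1
    obtain ⟨a, ha, hfa⟩ := (hFm z t hz ht).1
    exact le_antisymm h1 (by rw [← hfa]; exact (hys z t hz ht).1.2 a ha)
  have hGval : ∀ z, 0 ≤ z → Gm z t = Gpot ρb ub (τs z t) z t := by
    intro z hz
    have h1 := (hGm z t hz ht).2 (τs z t) (hτs z t hz ht).1.1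
    obtain ⟨a, ha, hfa⟩ := (hGm z t hz ht).1
    exact le_antisymm h1 (by rw [← hfa]; exact (hτs z t hz ht).1.2 a ha)
  have hysnn : ∀ z, 0 ≤ z → 0 ≤ ys z t := fun z hz => (hys z t hz ht).1.1
  have hτsnn : ∀ z, 0 ≤ z → 0 ≤ τs z t := fun z hz => (hτs z t hz ht).1.1
  constructor
  · unfold mpot
    by_cases hc : Fm x' t ≤ Gm x' t
    · rw [if_pos ⟨hc, hx'0⟩]
      have h1 : μpot Fm Gm x t ≤ Fpot ρ0 u0 (ys x' t) x t :=
        le_trans (min_le_left _ _) ((hFm x t hx0.le ht).2 _ (hysnn x' hx'0.le))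
      have h2 : Fpot ρ0 u0 (ys x' t) x t = Fpot ρ0 u0 (ys x' t) x' t
          - (x - x') * ∫ η in (0:ℝ)..ys x' t, ρ0 η := by
        rw [Fpot_translate hρ0meas hu0meas hρ0pos hρ0loc hu0bdd (hysnn x' hx'0.le) x' x t]
        ring
      have h3 : μpot Fm Gm x' t = Fpot ρ0 u0 (ys x' t) x' t := by
        rw [μpot, min_eq_left hc, hFval x' hx'0.le]
      linarith
    · rw [if_neg (fun h => hc h.1)]
      have h1 : μpot Fm Gm x t ≤ Gpot ρb ub (τs x' t) x t :=
        le_trans (min_le_right _ _) ((hGm x t hx0.le ht).2 _ (hτsnn x' hx'0.le))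
      have h2 : Gpot ρb ub (τs x' t) x t = Gpot ρb ub (τs x' t) x' t
          + (x - x') * ∫ η in (0:ℝ)..τs x' t, ρb η * ub η := by
        rw [Gpot_translate hρbmeas hubmeas hρbpos hρbloc hubbdd (hτsnn x' hx'0.le) x' x t]
      have h3 : μpot Fm Gm x' t = Gpot ρb ub (τs x' t) x' t := by
        rw [μpot, min_eq_right (le_of_not_ge hc), hGval x' hx'0.le]
      rw [mul_neg]
      linarith
  · unfold mpot
    by_cases hc : Fm x t ≤ Gm x t
    · rw [if_pos ⟨hc, hx0⟩]
      have h1 : μpot Fm Gm x' t ≤ Fpot ρ0 u0 (ys x t) x' t :=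
        le_trans (min_le_left _ _) ((hFm x' t hx'0.le ht).2 _ (hysnn x hx0.le))
      have h2 : Fpot ρ0 u0 (ys x t) x' t = Fpot ρ0 u0 (ys x t) x t
          + (x - x') * ∫ η in (0:ℝ)..ys x t, ρ0 η :=
        Fpot_translate hρ0meas hu0meas hρ0pos hρ0loc hu0bdd (hysnn x hx0.le) x x' t
      have h3 : μpot Fm Gm x t = Fpot ρ0 u0 (ys x t) x t := by
        rw [μpot, min_eq_left hc, hFval x hx0.le]
      linarith
    · rw [if_neg (fun h => hc h.1)]
      have h1 : μpot Fm Gm x' t ≤ Gpot ρb ub (τs x t) x' t :=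
        le_trans (min_le_right _ _) ((hGm x' t hx'0.le ht).2 _ (hτsnn x hx0.le))
      have h2 : Gpot ρb ub (τs x t) x' t = Gpot ρb ub (τs x t) x t
          - (x - x') * ∫ η in (0:ℝ)..τs x t, ρb η * ub η := by
        rw [Gpot_translate hρbmeas hubmeas hρbpos hρbloc hubbdd (hτsnn x hx0.le) x x' t]
        ring
      have h3 : μpot Fm Gm x t = Gpot ρb ub (τs x t) x t := by
        rw [μpot, min_eq_right (le_of_not_ge hc), hGval x hx0.le]
      rw [mul_neg]
      linarith

theorem stmt14
    (ρ0 u0 ρb ub : ℝ → ℝ)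
    (hρ0meas : Measurable ρ0) (hu0meas : Measurable u0)
    (hρbmeas : Measurable ρb) (hubmeas : Measurable ub)
    (hρ0pos : ∀ η, 0 ≤ η → 0 < ρ0 η)
    (hρbpos : ∀ η, 0 ≤ η → 0 < ρb η)
    (hubpos : ∀ η, 0 ≤ η → 0 < ub η)
    (hρ0loc : ∀ K : ℝ, ∃ M : ℝ, ∀ η ∈ Set.Icc (0:ℝ) K, ρ0 η ≤ M)
    (hρbloc : ∀ K : ℝ, ∃ M : ℝ, ∀ η ∈ Set.Icc (0:ℝ) K, ρb η ≤ M)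
    (hu0bdd : ∃ M : ℝ, ∀ η, 0 ≤ η → |u0 η| ≤ M)
    (hubbdd : ∃ M : ℝ, ∀ η, 0 ≤ η → |ub η| ≤ M)
    (Fm Gm : ℝ → ℝ → ℝ)
    (hFm : ∀ x t, 0 ≤ x → 0 ≤ t → IsMinValue (fun y => Fpot ρ0 u0 y x t) (Fm x t))
    (hGm : ∀ x t, 0 ≤ x → 0 ≤ t → IsMinValue (fun τ => Gpot ρb ub τ x t) (Gm x t))
    (ys yS τs τS : ℝ → ℝ → ℝ)
    (hys : ∀ x t, 0 ≤ x → 0 ≤ t → SmallestMinimizer (fun y => Fpot ρ0 u0 y x t) (ys x t))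
    (hyS : ∀ x t, 0 ≤ x → 0 ≤ t → LargestMinimizer (fun y => Fpot ρ0 u0 y x t) (yS x t))
    (hτs : ∀ x t, 0 ≤ x → 0 ≤ t → SmallestMinimizer (fun τ => Gpot ρb ub τ x t) (τs x t))
    (hτS : ∀ x t, 0 ≤ x → 0 ≤ t → LargestMinimizer (fun τ => Gpot ρb ub τ x t) (τS x t))
    (t x₁ x₂ : ℝ) (ht : 0 < t) (hx₁ : 0 < x₁) (hx : x₁ < x₂) :
    (∀ x x', x₁ ≤ x → x < x' → x' ≤ x₂ →
      (x - x') * mpot ρ0 ρb ub Fm Gm ys τs x' t ≤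
        μpot Fm Gm x' t - μpot Fm Gm x t ∧
      μpot Fm Gm x' t - μpot Fm Gm x t ≤
        (x - x') * mpot ρ0 ρb ub Fm Gm ys τs x t) ∧
    (∫ x in x₁..x₂, mpot ρ0 ρb ub Fm Gm ys τs x t) =
      μpot Fm Gm x₁ t - μpot Fm Gm x₂ t := by
  have key : ∀ x x' : ℝ, x₁ ≤ x → x ≤ x' → x' ≤ x₂ →
      ((x - x') * mpot ρ0 ρb ub Fm Gm ys τs x' t ≤ μpot Fm Gm x' t - μpot Fm Gm x t ∧
        μpot Fm Gm x' t - μpot Fm Gm x t ≤ (x - x') * mpot ρ0 ρb ub Fm Gm ys τs x t) :=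
    fun x x' ha hab _ =>
      key_ineq ρ0 u0 ρb ub hρ0meas hu0meas hρbmeas hubmeas hρ0pos hρbpos hρ0loc hρbloc
        hu0bdd hubbdd Fm Gm hFm hGm ys τs hys hτs ht.le (lt_of_lt_of_le hx₁ ha) hab
  refine ⟨fun x x' h1 h2 h3 => key x x' h1 h2.le h3, ?_⟩
  exact integral_eq_of_key (fun x => mpot ρ0 ρb ub Fm Gm ys τs x t)
    (fun x => μpot Fm Gm x t) hx (fun x x' ha hab hb => key x x' ha hab hb)
end

section
/- Fix x > 0 and let 0 < t₁ < t₂. For any two points t < t′ in [t₁,t₂] the inequalities (t′ − t)·q(x,t′) ≤ μ(x,t′) − μ(x,t) ≤ (t′ − t)·q(x,t) hold, and consequently ∫_{t₁}^{t₂} q(x,t) dt = μ(x,t₂) − μ(x,t₁). -/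
open MeasureTheory Set Filter

theorem stmt15
    (ρ0 u0 ρb ub : ℝ → ℝ)
    (hρ0meas : Measurable ρ0) (hu0meas : Measurable u0)
    (hρbmeas : Measurable ρb) (hubmeas : Measurable ub)
    (hρ0pos : ∀ η, 0 ≤ η → 0 < ρ0 η)
    (hρbpos : ∀ η, 0 ≤ η → 0 < ρb η)
    (hubpos : ∀ η, 0 ≤ η → 0 < ub η)
    (hρ0loc : ∀ K : ℝ, ∃ M : ℝ, ∀ η ∈ Set.Icc (0:ℝ) K, ρ0 η ≤ M)
    (hρbloc : ∀ K : ℝ, ∃ M : ℝ, ∀ η ∈ Set.Icc (0:ℝ) K, ρb η ≤ M)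
    (hu0bdd : ∃ M : ℝ, ∀ η, 0 ≤ η → |u0 η| ≤ M)
    (hubbdd : ∃ M : ℝ, ∀ η, 0 ≤ η → |ub η| ≤ M)
    (Fm Gm : ℝ → ℝ → ℝ)
    (hFm : ∀ x t, 0 ≤ x → 0 ≤ t → IsMinValue (fun y => Fpot ρ0 u0 y x t) (Fm x t))
    (hGm : ∀ x t, 0 ≤ x → 0 ≤ t → IsMinValue (fun τ => Gpot ρb ub τ x t) (Gm x t))
    (ys yS τs τS : ℝ → ℝ → ℝ)
    (hys : ∀ x t, 0 ≤ x → 0 ≤ t → SmallestMinimizer (fun y => Fpot ρ0 u0 y x t) (ys x t))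
    (hyS : ∀ x t, 0 ≤ x → 0 ≤ t → LargestMinimizer (fun y => Fpot ρ0 u0 y x t) (yS x t))
    (hτs : ∀ x t, 0 ≤ x → 0 ≤ t → SmallestMinimizer (fun τ => Gpot ρb ub τ x t) (τs x t))
    (hτS : ∀ x t, 0 ≤ x → 0 ≤ t → LargestMinimizer (fun τ => Gpot ρb ub τ x t) (τS x t))
    (x t₁ t₂ : ℝ) (hx : 0 < x) (ht₁ : 0 < t₁) (ht : t₁ < t₂) :
    (∀ t t', t₁ ≤ t → t < t' → t' ≤ t₂ →
      (t' - t) * qpot ρ0 u0 ρb ub Fm Gm ys τs x t' ≤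
        μpot Fm Gm x t' - μpot Fm Gm x t ∧
      μpot Fm Gm x t' - μpot Fm Gm x t ≤
        (t' - t) * qpot ρ0 u0 ρb ub Fm Gm ys τs x t) ∧
    (∫ t in t₁..t₂, qpot ρ0 u0 ρb ub Fm Gm ys τs x t) =
      μpot Fm Gm x t₂ - μpot Fm Gm x t₁ := by
  classical
  have hx0 : (0:ℝ) ≤ x := hx.le
  obtain ⟨M0, hM0⟩ := hu0bdd
  obtain ⟨Mb, hMb⟩ := hubbdd
  have hM0nn : 0 ≤ M0 := (abs_nonneg _).trans (hM0 0 le_rfl)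
  have hMbnn : 0 ≤ Mb := (abs_nonneg _).trans (hMb 0 le_rfl)
  -- a measurable function bounded on [0,b] is interval integrable
  have intbdd : ∀ (f : ℝ → ℝ), Measurable f → ∀ b C : ℝ, 0 ≤ b →
      (∀ z ∈ Set.Icc (0:ℝ) b, |f z| ≤ C) → IntervalIntegrable f volume 0 b := by
    intro f hf b C hb hC
    rw [intervalIntegrable_iff_integrableOn_Icc_of_le hb]
    refine (integrable_const C).mono' hf.aestronglyMeasurable.restrict ?_
    rw [MeasureTheory.ae_restrict_iff' measurableSet_Icc]
    exact Filter.Eventually.of_forall fun z hz => by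
      simpa [Real.norm_eq_abs] using hC z hz
  have hQ0int : ∀ y : ℝ, 0 ≤ y → IntervalIntegrable (fun η => ρ0 η * u0 η) volume 0 y := by
    intro y hy
    obtain ⟨M, hM⟩ := hρ0loc y
    refine intbdd _ (hρ0meas.mul hu0meas) y (M * M0) hy fun z hz => ?_
    simp only [Pi.mul_apply]
    rw [abs_mul]
    exact mul_le_mul (by rw [abs_of_pos (hρ0pos z hz.1)]; exact hM z hz) (hM0 z hz.1)
      (abs_nonneg _) ((hρ0pos 0 le_rfl).le.trans (hM 0 ⟨le_rfl, hy⟩))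
  have hQbint : ∀ y : ℝ, 0 ≤ y → IntervalIntegrable (fun η => ρb η * ub η ^ 2) volume 0 y := by
    intro y hy
    obtain ⟨M, hM⟩ := hρbloc y
    refine intbdd _ (hρbmeas.mul (hubmeas.pow_const 2)) y (M * Mb ^ 2) hy fun z hz => ?_
    simp only [Pi.mul_apply]
    rw [abs_mul]
    refine mul_le_mul (by rw [abs_of_pos (hρbpos z hz.1)]; exact hM z hz) ?_
      (abs_nonneg _) ((hρbpos 0 le_rfl).le.trans (hM 0 ⟨le_rfl, hy⟩))
    rw [abs_pow]
    exact pow_le_pow_left₀ (abs_nonneg _) (hMb z hz.1) 2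
  have hFint : ∀ (y s : ℝ), 0 ≤ y →
      IntervalIntegrable (fun η => (s * u0 η + η - x) * ρ0 η) volume 0 y := by
    intro y s hy
    obtain ⟨M, hM⟩ := hρ0loc y
    have hMnn : 0 ≤ M := (hρ0pos 0 le_rfl).le.trans (hM 0 ⟨le_rfl, hy⟩)
    refine intbdd _ (by fun_prop) y ((|s| * M0 + y + |x|) * M) hy fun z hz => ?_
    rw [abs_mul]
    refine mul_le_mul ?_ (by rw [abs_of_pos (hρ0pos z hz.1)]; exact hM z hz)
      (abs_nonneg _) (by positivity)
    have h1 : |s * u0 z| ≤ |s| * M0 := by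
      rw [abs_mul]; exact mul_le_mul_of_nonneg_left (hM0 z hz.1) (abs_nonneg _)
    have h2 : |z| ≤ y := by rw [abs_of_nonneg hz.1]; exact hz.2
    have h3 : |s * u0 z + z - x| ≤ |s * u0 z + z| + |x| := by
      rw [sub_eq_add_neg]
      exact (abs_add_le _ _).trans (by rw [abs_neg])
    have h4 := abs_add_le (s * u0 z) z
    linarith
  have hGint : ∀ (y s : ℝ), 0 ≤ y →
      IntervalIntegrable (fun η => (x - ub η * (s - η)) * (ρb η * ub η)) volume 0 y := by
    intro y s hy
    obtain ⟨M, hM⟩ := hρbloc y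
    have hMnn : 0 ≤ M := (hρbpos 0 le_rfl).le.trans (hM 0 ⟨le_rfl, hy⟩)
    refine intbdd _ (by fun_prop) y ((|x| + Mb * (|s| + y)) * (M * Mb)) hy fun z hz => ?_
    rw [abs_mul]
    have hz2 : |z| ≤ y := by rw [abs_of_nonneg hz.1]; exact hz.2
    have h5 : |s - z| ≤ |s| + y := by
      rw [sub_eq_add_neg]
      refine (abs_add_le _ _).trans ?_
      rw [abs_neg]; linarith
    have h1 : |x - ub z * (s - z)| ≤ |x| + Mb * (|s| + y) := by
      rw [sub_eq_add_neg]
      refine (abs_add_le _ _).trans ?_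
      rw [abs_neg, abs_mul]
      have := mul_le_mul (hMb z hz.1) h5 (abs_nonneg _) hMbnn
      linarith
    have h2 : |ρb z * ub z| ≤ M * Mb := by
      rw [abs_mul]
      exact mul_le_mul (by rw [abs_of_pos (hρbpos z hz.1)]; exact hM z hz)
        (hMb z hz.1) (abs_nonneg _) hMnn
    exact mul_le_mul h1 h2 (abs_nonneg _) (by positivity)
  -- shift identities in t
  have hFshift : ∀ y s s' : ℝ, 0 ≤ y →
      Fpot ρ0 u0 y x s' = Fpot ρ0 u0 y x s + (s' - s) * ∫ η in (0:ℝ)..y, ρ0 η * u0 η := by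
    intro y s s' hy
    have e1 : Fpot ρ0 u0 y x s' =
        ∫ η in (0:ℝ)..y, ((s * u0 η + η - x) * ρ0 η + (s' - s) * (ρ0 η * u0 η)) := by
      simp only [Fpot]
      congr 1
      funext η
      ring
    rw [e1, intervalIntegral.integral_add (hFint y s hy) ((hQ0int y hy).const_mul _),
      intervalIntegral.integral_const_mul]
    rfl
  have hGshift : ∀ y s s' : ℝ, 0 ≤ y →
      Gpot ρb ub y x s' = Gpot ρb ub y x s + (s - s') * ∫ η in (0:ℝ)..y, ρb η * ub η ^ 2 := by
    intro y s s' hy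
    have e1 : Gpot ρb ub y x s' =
        ∫ η in (0:ℝ)..y, ((x - ub η * (s - η)) * (ρb η * ub η) + (s - s') * (ρb η * ub η ^ 2)) := by
      simp only [Gpot]
      congr 1
      funext η
      ring
    rw [e1, intervalIntegral.integral_add (hGint y s hy) ((hQbint y hy).const_mul _),
      intervalIntegral.integral_const_mul]
    rfl
  -- minimum value facts
  have hys0 : ∀ s, 0 ≤ s → 0 ≤ ys x s := fun s hs => (hys x s hx0 hs).1.1
  have hτs0 : ∀ s, 0 ≤ s → 0 ≤ τs x s := fun s hs => (hτs x s hx0 hs).1.1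
  have hFle : ∀ s y, 0 ≤ s → 0 ≤ y → Fm x s ≤ Fpot ρ0 u0 y x s :=
    fun s y hs hy => (hFm x s hx0 hs).2 y hy
  have hGle : ∀ s y, 0 ≤ s → 0 ≤ y → Gm x s ≤ Gpot ρb ub y x s :=
    fun s y hs hy => (hGm x s hx0 hs).2 y hy
  have hFeq : ∀ s, 0 ≤ s → Fm x s = Fpot ρ0 u0 (ys x s) x s := by
    intro s hs
    obtain ⟨⟨a, ha, hav⟩, hmin⟩ := hFm x s hx0 hs
    exact le_antisymm (hmin _ (hys x s hx0 hs).1.1)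
      (by rw [← hav]; exact (hys x s hx0 hs).1.2 a ha)
  have hGeq : ∀ s, 0 ≤ s → Gm x s = Gpot ρb ub (τs x s) x s := by
    intro s hs
    obtain ⟨⟨a, ha, hav⟩, hmin⟩ := hGm x s hx0 hs
    exact le_antisymm (hmin _ (hτs x s hx0 hs).1.1)
      (by rw [← hav]; exact (hτs x s hx0 hs).1.2 a ha)
  -- the key two-sided estimate
  have key : ∀ t t', 0 ≤ t → t ≤ t' →
      (t' - t) * qpot ρ0 u0 ρb ub Fm Gm ys τs x t' ≤ μpot Fm Gm x t' - μpot Fm Gm x t ∧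
      μpot Fm Gm x t' - μpot Fm Gm x t ≤ (t' - t) * qpot ρ0 u0 ρb ub Fm Gm ys τs x t := by
    intro t t' ht0 htt
    have ht'0 : 0 ≤ t' := ht0.trans htt
    constructor
    · by_cases hc : Fm x t' ≤ Gm x t'
      · have hq : qpot ρ0 u0 ρb ub Fm Gm ys τs x t' = ∫ η in (0:ℝ)..ys x t', ρ0 η * u0 η := by
          simp only [qpot, if_pos hc]
        have hμ' : μpot Fm Gm x t' = Fm x t' := min_eq_left hc
        have h1 : μpot Fm Gm x t ≤ Fpot ρ0 u0 (ys x t') x t :=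
          (min_le_left _ _).trans (hFle t (ys x t') ht0 (hys0 t' ht'0))
        have h2 := hFshift (ys x t') t t' (hys0 t' ht'0)
        have h3 := hFeq t' ht'0
        rw [hq, hμ']
        linarith
      · have hq : qpot ρ0 u0 ρb ub Fm Gm ys τs x t' =
            - ∫ η in (0:ℝ)..τs x t', ρb η * ub η ^ 2 := by
          simp only [qpot, if_neg hc]
        have hμ' : μpot Fm Gm x t' = Gm x t' := min_eq_right (le_of_not_ge hc)
        have h1 : μpot Fm Gm x t ≤ Gpot ρb ub (τs x t') x t :=
          (min_le_right _ _).trans (hGle t (τs x t') ht0 (hτs0 t' ht'0))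
        have h2 := hGshift (τs x t') t t' (hτs0 t' ht'0)
        have h3 := hGeq t' ht'0
        rw [hq, hμ']
        have : (t' - t) * -(∫ η in (0:ℝ)..τs x t', ρb η * ub η ^ 2) =
            (t - t') * ∫ η in (0:ℝ)..τs x t', ρb η * ub η ^ 2 := by ring
        linarith
    · by_cases hc : Fm x t ≤ Gm x t
      · have hq : qpot ρ0 u0 ρb ub Fm Gm ys τs x t = ∫ η in (0:ℝ)..ys x t, ρ0 η * u0 η := by
          simp only [qpot, if_pos hc]
        have hμ : μpot Fm Gm x t = Fm x t := min_eq_left hc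
        have h1 : μpot Fm Gm x t' ≤ Fpot ρ0 u0 (ys x t) x t' :=
          (min_le_left _ _).trans (hFle t' (ys x t) ht'0 (hys0 t ht0))
        have h2 := hFshift (ys x t) t t' (hys0 t ht0)
        have h3 := hFeq t ht0
        rw [hq, hμ]
        linarith
      · have hq : qpot ρ0 u0 ρb ub Fm Gm ys τs x t =
            - ∫ η in (0:ℝ)..τs x t, ρb η * ub η ^ 2 := by
          simp only [qpot, if_neg hc]
        have hμ : μpot Fm Gm x t = Gm x t := min_eq_right (le_of_not_ge hc)
        have h1 : μpot Fm Gm x t' ≤ Gpot ρb ub (τs x t) x t' :=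
          (min_le_right _ _).trans (hGle t' (τs x t) ht'0 (hτs0 t ht0))
        have h2 := hGshift (τs x t) t t' (hτs0 t ht0)
        have h3 := hGeq t ht0
        rw [hq, hμ]
        have : (t' - t) * -(∫ η in (0:ℝ)..τs x t, ρb η * ub η ^ 2) =
            (t - t') * ∫ η in (0:ℝ)..τs x t, ρb η * ub η ^ 2 := by ring
        linarith
  set q : ℝ → ℝ := fun s => qpot ρ0 u0 ρb ub Fm Gm ys τs x s with hqdef
  set h : ℝ → ℝ := fun s => μpot Fm Gm x s with hhdef
  refine ⟨fun t t' h1 h2 h3 => key t t' (ht₁.le.trans h1) h2.le, ?_⟩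
  -- q is antitone on [0, ∞)
  have qanti : ∀ a b, 0 ≤ a → a ≤ b → q b ≤ q a := by
    intro a b ha hab
    rcases eq_or_lt_of_le hab with rfl | hlt
    · exact le_rfl
    · have hk := key a b ha hab
      have hmm := hk.1.trans hk.2
      exact le_of_mul_le_mul_left hmm (sub_pos.mpr hlt)
  have qint : ∀ a b, 0 ≤ a → a ≤ b → IntervalIntegrable q volume a b := by
    intro a b h1 h2
    apply AntitoneOn.intervalIntegrable
    intro u hu v hv huv
    rw [Set.uIcc_of_le h2] at hu hv
    exact qanti u v (h1.trans hu.1) huv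
  have intbound : ∀ a b, 0 ≤ a → a ≤ b →
      (b - a) * q b ≤ (∫ s in a..b, q s) ∧ (∫ s in a..b, q s) ≤ (b - a) * q a := by
    intro a b h1 h2
    have hint := qint a b h1 h2
    constructor
    · have hmono := intervalIntegral.integral_mono_on h2 intervalIntegrable_const hint
        (fun u hu => qanti u b (h1.trans hu.1) hu.2)
      simpa [intervalIntegral.integral_const, smul_eq_mul] using hmono
    · have hmono := intervalIntegral.integral_mono_on h2 hint intervalIntegrable_const
        (fun u hu => qanti a u h1 hu.1)
      simpa [intervalIntegral.integral_const, smul_eq_mul] using hmono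
  -- squeeze via uniform partitions
  have habs : ∀ n : ℕ, 1 ≤ n →
      |h t₂ - h t₁ - ∫ s in t₁..t₂, q s| ≤ ((t₂ - t₁) / n) * (q t₁ - q t₂) := by
    intro n hn
    have hn0 : (0:ℝ) < n := by exact_mod_cast hn
    have hne : (n:ℝ) ≠ 0 := ne_of_gt hn0
    set Δ : ℝ := (t₂ - t₁) / n with hΔdef
    have hΔpos : 0 < Δ := div_pos (by linarith) hn0
    set a : ℕ → ℝ := fun i => t₁ + i * Δ with hadef
    have ha0 : a 0 = t₁ := by simp [hadef]
    have han : a n = t₂ := by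
      simp only [hadef, hΔdef]
      field_simp
      ring
    have hstep : ∀ i : ℕ, a (i + 1) - a i = Δ := by
      intro i; simp only [hadef]; push_cast; ring
    have hat1 : ∀ i : ℕ, t₁ ≤ a i := by
      intro i
      have : 0 ≤ (i : ℝ) * Δ := by positivity
      simp only [hadef]; linarith
    have ha0le : ∀ i : ℕ, 0 ≤ a i := fun i => ht₁.le.trans (hat1 i)
    have hmono : ∀ i : ℕ, a i ≤ a (i + 1) := by
      intro i; have := hstep i; linarith
    have hsum1 : ∑ i ∈ Finset.range n, (h (a (i + 1)) - h (a i)) = h t₂ - h t₁ := by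
      rw [Finset.sum_range_sub (fun i => h (a i)), ha0, han]
    have hsum2 : ∑ i ∈ Finset.range n, (∫ s in a i..a (i + 1), q s) = ∫ s in t₁..t₂, q s := by
      rw [intervalIntegral.sum_integral_adjacent_intervals
        (fun k _ => qint _ _ (ha0le k) (hmono k)), ha0, han]
    have hsum3 : ∑ i ∈ Finset.range n, (q (a i) - q (a (i + 1))) = q t₁ - q t₂ := by
      rw [Finset.sum_range_sub' (fun i => q (a i)), ha0, han]
    have hdecomp : h t₂ - h t₁ - (∫ s in t₁..t₂, q s) =
        ∑ i ∈ Finset.range n, ((h (a (i + 1)) - h (a i)) - ∫ s in a i..a (i + 1), q s) := by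
      rw [Finset.sum_sub_distrib, hsum1, hsum2]
    rw [hdecomp]
    calc |∑ i ∈ Finset.range n, ((h (a (i + 1)) - h (a i)) - ∫ s in a i..a (i + 1), q s)|
        ≤ ∑ i ∈ Finset.range n, |(h (a (i + 1)) - h (a i)) - ∫ s in a i..a (i + 1), q s| :=
          Finset.abs_sum_le_sum_abs _ _
      _ ≤ ∑ i ∈ Finset.range n, Δ * (q (a i) - q (a (i + 1))) := by
          refine Finset.sum_le_sum fun i _ => ?_
          have hk := key (a i) (a (i + 1)) (ha0le i) (hmono i)
          have hb := intbound (a i) (a (i + 1)) (ha0le i) (hmono i)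
          rw [hstep i] at hk hb
          have hexp : Δ * (q (a i) - q (a (i + 1))) =
              Δ * q (a i) - Δ * q (a (i + 1)) := by ring
          rw [abs_le]
          constructor
          · linarith [hk.1, hb.2]
          · linarith [hk.2, hb.1]
      _ = Δ * (q t₁ - q t₂) := by rw [← Finset.mul_sum, hsum3]
  -- conclude: the error is zero
  have hqd : 0 ≤ q t₁ - q t₂ := sub_nonneg.mpr (qanti t₁ t₂ ht₁.le ht.le)
  have hE : h t₂ - h t₁ - (∫ s in t₁..t₂, q s) = 0 := by
    by_contra hne0
    have hpos : 0 < |h t₂ - h t₁ - ∫ s in t₁..t₂, q s| := abs_pos.mpr hne0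
    set E := |h t₂ - h t₁ - ∫ s in t₁..t₂, q s| with hEdef
    set C := (t₂ - t₁) * (q t₁ - q t₂) with hCdef
    obtain ⟨n, hn⟩ := exists_nat_gt (C / E)
    have hle := habs (n + 1) (Nat.le_add_left 1 n)
    have hnp : (0:ℝ) < (n:ℝ) + 1 := by positivity
    have h1 : C / E < (n:ℝ) + 1 := by
      calc C / E < n := hn
        _ ≤ (n:ℝ) + 1 := by linarith
    have hC : C < E * ((n:ℝ) + 1) := by
      rw [div_lt_iff₀ hpos] at h1
      linarith [h1]
    have heq : ((t₂ - t₁) / ((n:ℕ) + 1 : ℕ)) * (q t₁ - q t₂) = C / ((n:ℝ) + 1) := by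
      push_cast
      rw [hCdef]
      ring
    rw [heq] at hle
    have : C / ((n:ℝ) + 1) < E := by
      rw [div_lt_iff₀ hnp]
      linarith [hC]
    linarith [hle, this]
  linarith [hE]
end

section
/- Let t > 0 satisfy F(0,t) < G(0,t). Then: (i) every minimizer of y ↦ F(y,0,t) over [0,∞) is strictly positive; and (ii) for every x > 0 with F(x,t) < G(x,t), the velocity satisfies t·u(x,t) ≤ x − y_*(x,t). (Together with the convergence y_*(x,t) → y^*(0,t) > 0 as x → 0+, this yields u(0+,t) < 0.) -/
open MeasureTheory Set Filter

lemma myIntInt {f : ℝ → ℝ} (hf : Measurable f) {a b C : ℝ}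
    (hC : ∀ x ∈ Set.uIcc a b, |f x| ≤ C) : IntervalIntegrable f volume a b := by
  rw [intervalIntegrable_iff]
  apply MeasureTheory.Measure.integrableOn_of_bounded
  · exact measure_Ioc_lt_top.ne
  · exact hf.aestronglyMeasurable
  · filter_upwards [MeasureTheory.ae_restrict_mem measurableSet_uIoc] with x hx
    rw [Real.norm_eq_abs]
    exact hC x (Set.uIoc_subset_uIcc hx)

theorem stmt17
    (ρ0 u0 ρb ub : ℝ → ℝ)
    (hρ0meas : Measurable ρ0) (hu0meas : Measurable u0)
    (hρbmeas : Measurable ρb) (hubmeas : Measurable ub)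
    (hρ0pos : ∀ η, 0 ≤ η → 0 < ρ0 η)
    (hρbpos : ∀ η, 0 ≤ η → 0 < ρb η)
    (hubpos : ∀ η, 0 ≤ η → 0 < ub η)
    (hρ0loc : ∀ K : ℝ, ∃ M : ℝ, ∀ η ∈ Set.Icc (0:ℝ) K, ρ0 η ≤ M)
    (hρbloc : ∀ K : ℝ, ∃ M : ℝ, ∀ η ∈ Set.Icc (0:ℝ) K, ρb η ≤ M)
    (hu0bdd : ∃ M : ℝ, ∀ η, 0 ≤ η → |u0 η| ≤ M)
    (hubbdd : ∃ M : ℝ, ∀ η, 0 ≤ η → |ub η| ≤ M)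
    (Fm Gm : ℝ → ℝ → ℝ)
    (hFm : ∀ x t, 0 ≤ x → 0 ≤ t → IsMinValue (fun y => Fpot ρ0 u0 y x t) (Fm x t))
    (hGm : ∀ x t, 0 ≤ x → 0 ≤ t → IsMinValue (fun τ => Gpot ρb ub τ x t) (Gm x t))
    (ys yS : ℝ → ℝ → ℝ)
    (hys : ∀ x t, 0 ≤ x → 0 ≤ t → SmallestMinimizer (fun y => Fpot ρ0 u0 y x t) (ys x t))
    (hyS : ∀ x t, 0 ≤ x → 0 ≤ t → LargestMinimizer (fun y => Fpot ρ0 u0 y x t) (yS x t))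
    (u : ℝ → ℝ → ℝ)
    (hu : ∀ x t, 0 < x → 0 < t → Fm x t < Gm x t →
      (ys x t = yS x t → u x t = (x - ys x t) / t) ∧
      (ys x t < yS x t →
        u x t = (∫ η in ys x t..yS x t, ρ0 η * u0 η) / ∫ η in ys x t..yS x t, ρ0 η))
    (t : ℝ) (ht : 0 < t) (hFG : Fm 0 t < Gm 0 t) :
    (∀ y, MinimizesOn (fun y => Fpot ρ0 u0 y 0 t) y → 0 < y) ∧
    (∀ x, 0 < x → Fm x t < Gm x t → t * u x t ≤ x - ys x t) := by
  constructor
  · -- part (i)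
    intro y hy
    by_contra hpos
    have hy0 : y = 0 := le_antisymm (not_lt.mp hpos) hy.1
    subst hy0
    have hF0 : Fpot ρ0 u0 0 0 t = 0 := by
      simp [Fpot]
    -- Fm 0 t = 0
    obtain ⟨⟨a, ha0, haF⟩, hFle⟩ := hFm 0 t le_rfl ht.le
    have h1 : Fm 0 t ≤ 0 := by
      have := hFle 0 le_rfl
      simpa [hF0] using this
    have h2 : (0:ℝ) ≤ Fm 0 t := by
      have := hy.2 a ha0
      simpa [hF0, haF] using this
    have hFm0 : Fm 0 t = 0 := le_antisymm h1 h2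
    -- Gm 0 t ≤ 0
    obtain ⟨_, hGle⟩ := hGm 0 t le_rfl ht.le
    have hG0 : Gpot ρb ub 0 0 t = 0 := by simp [Gpot]
    have h3 : Gm 0 t ≤ 0 := by
      have := hGle 0 le_rfl
      simpa [hG0] using this
    linarith
  · -- part (ii)
    intro x hx hFGx
    set a := ys x t with ha
    set b := yS x t with hb
    have hSmin := hys x t hx.le ht.le
    have hLmax := hyS x t hx.le ht.le
    have ha0 : 0 ≤ a := hSmin.1.1
    have hab : a ≤ b := hSmin.2 b hLmax.1
    have hb0 : 0 ≤ b := le_trans ha0 hab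
    rcases eq_or_lt_of_le hab with heq | hlt
    · -- a = b case
      have hu1 := (hu x t hx ht hFGx).1 heq
      rw [hu1]
      rw [mul_div_cancel₀ _ ht.ne']
    · -- a < b case
      have hu2 := (hu x t hx ht hFGx).2 hlt
      obtain ⟨Mu, hMu⟩ := hu0bdd
      obtain ⟨M, hM⟩ := hρ0loc b
      have hMpos : 0 < M := lt_of_lt_of_le (hρ0pos 0 le_rfl) (hM 0 ⟨le_rfl, hb0⟩)
      have hMu0 : 0 ≤ Mu := le_trans (abs_nonneg _) (hMu 0 le_rfl)
      -- integrability of the pieces on any subinterval of [0,b]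
      have hsub : ∀ c d : ℝ, 0 ≤ c → 0 ≤ d → c ≤ b → d ≤ b →
          Set.uIcc c d ⊆ Set.Icc 0 b := by
        intro c d hc hd hcb hdb x hxm
        exact ⟨le_trans (le_inf hc hd) hxm.1, le_trans hxm.2 (sup_le hcb hdb)⟩
      have hρ0bd : ∀ η ∈ Set.Icc (0:ℝ) b, |ρ0 η| ≤ M := by
        intro η hη
        rw [abs_of_pos (hρ0pos η hη.1)]
        exact hM η hη
      have I3 : ∀ c d : ℝ, 0 ≤ c → 0 ≤ d → c ≤ b → d ≤ b →
          IntervalIntegrable ρ0 volume c d := by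
        intro c d hc hd hcb hdb
        exact myIntInt hρ0meas (fun η hη => hρ0bd η (hsub c d hc hd hcb hdb hη))
      have I1 : ∀ c d : ℝ, 0 ≤ c → 0 ≤ d → c ≤ b → d ≤ b →
          IntervalIntegrable (fun η => ρ0 η * u0 η) volume c d := by
        intro c d hc hd hcb hdb
        refine myIntInt (hρ0meas.mul hu0meas) (C := M * Mu) ?_
        intro η hη
        have hm := hsub c d hc hd hcb hdb hη
        rw [Pi.mul_apply, abs_mul]
        exact mul_le_mul (hρ0bd η hm) (hMu η hm.1) (abs_nonneg _) hMpos.le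
      have I2 : ∀ c d : ℝ, 0 ≤ c → 0 ≤ d → c ≤ b → d ≤ b →
          IntervalIntegrable (fun η => (η - x) * ρ0 η) volume c d := by
        intro c d hc hd hcb hdb
        refine myIntInt ((measurable_id.sub measurable_const).mul hρ0meas)
          (C := (b + x) * M) ?_
        intro η hη
        have hm := hsub c d hc hd hcb hdb hη
        rw [Pi.mul_apply, Pi.sub_apply, abs_mul]
        refine mul_le_mul ?_ (hρ0bd η hm) (abs_nonneg _) (by positivity)
        simp only [id_eq]
        exact abs_le.mpr ⟨by linarith [hm.1, hm.2], by linarith [hm.2]⟩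
      -- F values equal at the two minimizers
      have hFeq : Fpot ρ0 u0 b x t = Fpot ρ0 u0 a x t :=
        le_antisymm (hLmax.1.2 a ha0) (hSmin.1.2 b hb0)
      -- the integrand of Fpot
      have Ig : ∀ c d : ℝ, 0 ≤ c → 0 ≤ d → c ≤ b → d ≤ b →
          IntervalIntegrable (fun η => (t * u0 η + η - x) * ρ0 η) volume c d := by
        intro c d hc hd hcb hdb
        have : (fun η => (t * u0 η + η - x) * ρ0 η)
            = fun η => t * (ρ0 η * u0 η) + (η - x) * ρ0 η := by
          funext η; ring
        rw [this]
        exact ((I1 c d hc hd hcb hdb).const_mul t).add (I2 c d hc hd hcb hdb)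
      have hzero : ∫ η in a..b, (t * u0 η + η - x) * ρ0 η = 0 := by
        have hkey := intervalIntegral.integral_interval_sub_left
          (f := fun η => (t * u0 η + η - x) * ρ0 η) (μ := volume)
          (Ig 0 b le_rfl hb0 hb0 le_rfl)
          (Ig 0 a le_rfl ha0 hb0 hab)
        have : Fpot ρ0 u0 b x t - Fpot ρ0 u0 a x t
            = ∫ η in a..b, (t * u0 η + η - x) * ρ0 η := hkey
        rw [hFeq] at this
        linarith [this]
      -- split the zero integral
      have hsplit : t * (∫ η in a..b, ρ0 η * u0 η)
          + ∫ η in a..b, (η - x) * ρ0 η = 0 := by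
        rw [← intervalIntegral.integral_const_mul,
          ← intervalIntegral.integral_add
            ((I1 a b ha0 hb0 hab le_rfl).const_mul t) (I2 a b ha0 hb0 hab le_rfl)]
        rw [← hzero]
        apply intervalIntegral.integral_congr
        intro η _
        ring
      -- monotone comparison
      have hmono : (a - x) * ∫ η in a..b, ρ0 η ≤ ∫ η in a..b, (η - x) * ρ0 η := by
        rw [← intervalIntegral.integral_const_mul]
        apply intervalIntegral.integral_mono_on hab
          ((I3 a b ha0 hb0 hab le_rfl).const_mul (a - x)) (I2 a b ha0 hb0 hab le_rfl)
        intro η hη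
        have : 0 ≤ ρ0 η := (hρ0pos η (le_trans ha0 hη.1)).le
        nlinarith [hη.1]
      have hIpos : 0 < ∫ η in a..b, ρ0 η := by
        apply intervalIntegral.intervalIntegral_pos_of_pos_on
          (I3 a b ha0 hb0 hab le_rfl)
          (fun η hη => hρ0pos η (le_trans ha0 hη.1.le)) hlt
      rw [hu2, ← ha, ← hb, ← mul_div_assoc]
      rw [div_le_iff₀ hIpos]
      nlinarith [hsplit, hmono]
end

section
/- Let x > 0, t > 0 and 0 ≤ τ₁ < τ₂ < t, and suppose ∫_{τ₁}^{τ₂} (x − u_b(η)(t − η)) ρ_b(η) u_b(η) dη = 0. Then the mean boundary velocity ū = (∫_{τ₁}^{τ₂} ρ_b(η) u_b(η)² dη)/(∫_{τ₁}^{τ₂} ρ_b(η) u_b(η) dη) satisfies the strict entropy inequalities x/(t − τ₂) > ū > x/(t − τ₁). (This expresses the entropy condition u(x−,t) > u(x,t) > u(x+,t) at a shock generated by the boundary data, where τ₁ = τ_*(x,t) and τ₂ = τ^*(x,t).) -/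
open MeasureTheory Set Filter

lemma bdd_intervalIntegrable (f : ℝ → ℝ) (a b C : ℝ) (hab : a ≤ b)
    (hf : Measurable f) (hC : ∀ η ∈ Set.Icc a b, |f η| ≤ C) :
    IntervalIntegrable f volume a b := by
  rw [intervalIntegrable_iff_integrableOn_Icc_of_le hab]
  apply Measure.integrableOn_of_bounded (measure_Icc_lt_top).ne hf.aestronglyMeasurable
  exact (ae_restrict_iff' measurableSet_Icc).mpr (Filter.Eventually.of_forall
    (fun η hη => by simpa [Real.norm_eq_abs] using hC η hη))


theorem stmt18
    (ρ0 u0 ρb ub : ℝ → ℝ)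
    (hρ0meas : Measurable ρ0) (hu0meas : Measurable u0)
    (hρbmeas : Measurable ρb) (hubmeas : Measurable ub)
    (hρ0pos : ∀ η, 0 ≤ η → 0 < ρ0 η)
    (hρbpos : ∀ η, 0 ≤ η → 0 < ρb η)
    (hubpos : ∀ η, 0 ≤ η → 0 < ub η)
    (hρ0loc : ∀ K : ℝ, ∃ M : ℝ, ∀ η ∈ Set.Icc (0:ℝ) K, ρ0 η ≤ M)
    (hρbloc : ∀ K : ℝ, ∃ M : ℝ, ∀ η ∈ Set.Icc (0:ℝ) K, ρb η ≤ M)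
    (hu0bdd : ∃ M : ℝ, ∀ η, 0 ≤ η → |u0 η| ≤ M)
    (hubbdd : ∃ M : ℝ, ∀ η, 0 ≤ η → |ub η| ≤ M)
    (x t τ₁ τ₂ : ℝ) (hx : 0 < x) (ht : 0 < t)
    (hτ₁ : 0 ≤ τ₁) (hτ : τ₁ < τ₂) (hτ₂ : τ₂ < t)
    (hzero : (∫ η in τ₁..τ₂, (x - ub η * (t - η)) * (ρb η * ub η)) = 0) :
    (∫ η in τ₁..τ₂, ρb η * ub η ^ 2) / (∫ η in τ₁..τ₂, ρb η * ub η) < x / (t - τ₂) ∧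
    x / (t - τ₁) < (∫ η in τ₁..τ₂, ρb η * ub η ^ 2) / (∫ η in τ₁..τ₂, ρb η * ub η) := by
  obtain ⟨Mρ, hMρ⟩ := hρbloc τ₂
  obtain ⟨Mu, hMu⟩ := hubbdd
  have hMu0 : 0 ≤ Mu := le_trans (abs_nonneg _) (hMu 0 le_rfl)
  have hMρ0 : 0 ≤ Mρ := le_trans (hρbpos 0 le_rfl).le (hMρ 0 ⟨le_rfl, by linarith⟩)
  have hτle : τ₁ ≤ τ₂ := hτ.le
  have hsub : ∀ η ∈ Set.Icc τ₁ τ₂, η ∈ Set.Icc (0:ℝ) τ₂ := fun η hη => ⟨le_trans hτ₁ hη.1, hη.2⟩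
  -- integrability of g1 and g2
  have hg1 : IntervalIntegrable (fun η => ρb η * ub η) volume τ₁ τ₂ := by
    apply bdd_intervalIntegrable _ _ _ (Mρ * Mu) hτle (hρbmeas.mul hubmeas)
    intro η hη
    have h1 := hMρ η (hsub η hη)
    have h2 := hMu η (le_trans hτ₁ hη.1)
    have h3 := (hρbpos η (le_trans hτ₁ hη.1)).le
    rw [Pi.mul_apply, abs_mul, abs_of_nonneg h3]
    exact mul_le_mul h1 h2 (abs_nonneg _) hMρ0
  have hg2 : IntervalIntegrable (fun η => ρb η * ub η ^ 2) volume τ₁ τ₂ := by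
    apply bdd_intervalIntegrable _ _ _ (Mρ * Mu ^ 2) hτle (hρbmeas.mul (hubmeas.pow_const 2))
    intro η hη
    have h1 := hMρ η (hsub η hη)
    have h2 := hMu η (le_trans hτ₁ hη.1)
    have h3 := (hρbpos η (le_trans hτ₁ hη.1)).le
    rw [Pi.mul_apply, abs_mul, abs_of_nonneg h3]
    refine mul_le_mul h1 ?_ (abs_nonneg _) hMρ0
    rw [abs_pow]
    exact pow_le_pow_left₀ (abs_nonneg _) h2 2
  set J := ∫ η in τ₁..τ₂, ρb η * ub η with hJdef
  set K := ∫ η in τ₁..τ₂, ρb η * ub η ^ 2 with hKdef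
  have hA : IntervalIntegrable (fun η => (t - η) * (ρb η * ub η ^ 2)) volume τ₁ τ₂ :=
    hg2.continuousOn_mul (by fun_prop)
  -- x * J = ∫ (t-η) g2
  have hxJ : x * J = ∫ η in τ₁..τ₂, (t - η) * (ρb η * ub η ^ 2) := by
    have h1 : ∀ η : ℝ, (x - ub η * (t - η)) * (ρb η * ub η)
        = x * (ρb η * ub η) - (t - η) * (ρb η * ub η ^ 2) := fun η => by ring
    have h2 : (∫ η in τ₁..τ₂, (x * (ρb η * ub η) - (t - η) * (ρb η * ub η ^ 2))) = 0 := by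
      rw [← hzero]; exact intervalIntegral.integral_congr (fun η _ => (h1 η).symm)
    rw [intervalIntegral.integral_sub (hg1.const_mul x) hA,
      intervalIntegral.integral_const_mul] at h2
    linarith
  have hpos : ∀ η ∈ Set.Ioo τ₁ τ₂, 0 < ρb η * ub η ^ 2 := by
    intro η hη
    have h0 : (0:ℝ) ≤ η := le_trans hτ₁ hη.1.le
    exact mul_pos (hρbpos η h0) (pow_pos (hubpos η h0) 2)
  have hJpos : 0 < J := by
    apply intervalIntegral.intervalIntegral_pos_of_pos_on hg1 _ hτ
    intro η hη
    have h0 : (0:ℝ) ≤ η := le_trans hτ₁ hη.1.le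
    exact mul_pos (hρbpos η h0) (hubpos η h0)
  have key1 : 0 < x * J - (t - τ₂) * K := by
    have h : (0:ℝ) < ∫ η in τ₁..τ₂, (τ₂ - η) * (ρb η * ub η ^ 2) := by
      apply intervalIntegral.intervalIntegral_pos_of_pos_on
        (hg2.continuousOn_mul (by fun_prop)) _ hτ
      intro η hη
      exact mul_pos (by linarith [hη.2]) (hpos η hη)
    have heq : (∫ η in τ₁..τ₂, (τ₂ - η) * (ρb η * ub η ^ 2))
        = (∫ η in τ₁..τ₂, (t - η) * (ρb η * ub η ^ 2)) - (t - τ₂) * K := by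
      rw [← intervalIntegral.integral_const_mul,
        ← intervalIntegral.integral_sub hA (hg2.const_mul _)]
      exact intervalIntegral.integral_congr (fun η _ => by ring)
    rw [heq, ← hxJ] at h
    linarith
  have key2 : 0 < (t - τ₁) * K - x * J := by
    have h : (0:ℝ) < ∫ η in τ₁..τ₂, (η - τ₁) * (ρb η * ub η ^ 2) := by
      apply intervalIntegral.intervalIntegral_pos_of_pos_on
        (hg2.continuousOn_mul (by fun_prop)) _ hτ
      intro η hη
      exact mul_pos (by linarith [hη.1]) (hpos η hη)
    have heq : (∫ η in τ₁..τ₂, (η - τ₁) * (ρb η * ub η ^ 2))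
        = (t - τ₁) * K - ∫ η in τ₁..τ₂, (t - η) * (ρb η * ub η ^ 2) := by
      rw [← intervalIntegral.integral_const_mul,
        ← intervalIntegral.integral_sub (hg2.const_mul _) hA]
      exact intervalIntegral.integral_congr (fun η _ => by ring)
    rw [heq, ← hxJ] at h
    linarith
  constructor
  · rw [div_lt_div_iff₀ hJpos (by linarith : (0:ℝ) < t - τ₂)]
    nlinarith [key1]
  · rw [div_lt_div_iff₀ (by linarith : (0:ℝ) < t - τ₁) hJpos]
    nlinarith [key2]
end

section
/- Assume in addition that ρ₀ is integrable on [0,∞). Then for every t > 0: the function x ↦ m(x,t) is nondecreasing on (0,∞), m(0,t) = −∫₀^t ρ_b(η) u_b(η) dη, and the total mass is conserved: lim_{x → ∞} m(x,t) − m(0,t) = ∫₀^∞ ρ₀(x) dx + ∫₀^t ρ_b(η) u_b(η) dη. -/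
open MeasureTheory Set Filter

lemma bddIO {f : ℝ → ℝ} (hf : Measurable f) {a b C : ℝ}
    (hC : ∀ x ∈ Set.Ioc a b, |f x| ≤ C) :
    MeasureTheory.IntegrableOn f (Set.Ioc a b) := by
  refine Integrable.mono' (g := fun _ => C)
    (integrableOn_const measure_Ioc_lt_top.ne)
    hf.aestronglyMeasurable.restrict ?_
  filter_upwards [ae_restrict_mem measurableSet_Ioc] with x hx
  simpa using hC x hx

lemma mulII {g h : ℝ → ℝ} (hg : Measurable g) (hh : Measurable h) {a b C : ℝ} (hab : a ≤ b)
    (hint : MeasureTheory.IntegrableOn h (Set.Ioc a b))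
    (hC : ∀ x ∈ Set.Ioc a b, |g x| ≤ C) :
    IntervalIntegrable (fun x => g x * h x) volume a b := by
  rw [intervalIntegrable_iff_integrableOn_Ioc_of_le hab]
  refine Integrable.mono' (g := fun x => C * |h x|) ((hint.norm).const_mul C)
    ((hg.mul hh).aestronglyMeasurable.restrict) ?_
  filter_upwards [ae_restrict_mem measurableSet_Ioc] with x hx
  have h1 := hC x hx
  calc ‖g x * h x‖ = |g x| * |h x| := by rw [Real.norm_eq_abs, abs_mul]
    _ ≤ C * |h x| := mul_le_mul_of_nonneg_right h1 (abs_nonneg _)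

theorem stmt19
    (ρ0 u0 ρb ub : ℝ → ℝ)
    (hρ0meas : Measurable ρ0) (hu0meas : Measurable u0)
    (hρbmeas : Measurable ρb) (hubmeas : Measurable ub)
    (hρ0pos : ∀ η, 0 ≤ η → 0 < ρ0 η)
    (hρbpos : ∀ η, 0 ≤ η → 0 < ρb η)
    (hubpos : ∀ η, 0 ≤ η → 0 < ub η)
    (hρ0loc : ∀ K : ℝ, ∃ M : ℝ, ∀ η ∈ Set.Icc (0:ℝ) K, ρ0 η ≤ M)
    (hρbloc : ∀ K : ℝ, ∃ M : ℝ, ∀ η ∈ Set.Icc (0:ℝ) K, ρb η ≤ M)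
    (hu0bdd : ∃ M : ℝ, ∀ η, 0 ≤ η → |u0 η| ≤ M)
    (hubbdd : ∃ M : ℝ, ∀ η, 0 ≤ η → |ub η| ≤ M)
    (Fm Gm : ℝ → ℝ → ℝ)
    (hFm : ∀ x t, 0 ≤ x → 0 ≤ t → IsMinValue (fun y => Fpot ρ0 u0 y x t) (Fm x t))
    (hGm : ∀ x t, 0 ≤ x → 0 ≤ t → IsMinValue (fun τ => Gpot ρb ub τ x t) (Gm x t))
    (ys yS τs τS : ℝ → ℝ → ℝ)
    (hys : ∀ x t, 0 ≤ x → 0 ≤ t → SmallestMinimizer (fun y => Fpot ρ0 u0 y x t) (ys x t))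
    (hyS : ∀ x t, 0 ≤ x → 0 ≤ t → LargestMinimizer (fun y => Fpot ρ0 u0 y x t) (yS x t))
    (hτs : ∀ x t, 0 ≤ x → 0 ≤ t → SmallestMinimizer (fun τ => Gpot ρb ub τ x t) (τs x t))
    (hτS : ∀ x t, 0 ≤ x → 0 ≤ t → LargestMinimizer (fun τ => Gpot ρb ub τ x t) (τS x t))
    (hρ0int : MeasureTheory.IntegrableOn ρ0 (Set.Ici 0))
    (t : ℝ) (ht : 0 < t) :
    MonotoneOn (fun x => mpot ρ0 ρb ub Fm Gm ys τs x t) (Set.Ioi 0) ∧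
    mpot ρ0 ρb ub Fm Gm ys τs 0 t = -∫ η in (0:ℝ)..t, ρb η * ub η ∧
    Filter.Tendsto
      (fun x => mpot ρ0 ρb ub Fm Gm ys τs x t - mpot ρ0 ρb ub Fm Gm ys τs 0 t)
      Filter.atTop
      (nhds ((∫ x in Set.Ioi (0:ℝ), ρ0 x) + ∫ η in (0:ℝ)..t, ρb η * ub η)) := by
  obtain ⟨M0, hM0⟩ := hu0bdd
  obtain ⟨Mb, hMb⟩ := hubbdd
  have hM0n : 0 ≤ M0 := le_trans (abs_nonneg _) (hM0 0 le_rfl)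
  have hMbn : 0 ≤ Mb := le_trans (abs_nonneg _) (hMb 0 le_rfl)
  have hubMb : ∀ η, 0 ≤ η → ub η ≤ Mb := fun η hη => le_trans (le_abs_self _) (hMb η hη)
  -- basic integrability facts
  have hRIO : ∀ a b : ℝ, 0 ≤ a → IntegrableOn ρ0 (Ioc a b) :=
    fun a b ha => hρ0int.mono_set (fun x hx => le_trans ha (le_of_lt hx.1))
  have hRII : ∀ a b : ℝ, 0 ≤ a → a ≤ b → IntervalIntegrable ρ0 volume a b :=
    fun a b ha hab => (intervalIntegrable_iff_integrableOn_Ioc_of_le hab).mpr (hRIO a b ha)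
  have hSIO : ∀ a b : ℝ, 0 ≤ a → IntegrableOn (fun η => ρb η * ub η) (Ioc a b) := by
    intro a b ha
    obtain ⟨M, hM⟩ := hρbloc (max b 0)
    have hMn : 0 ≤ M := le_trans (hρbpos 0 le_rfl).le (hM 0 ⟨le_rfl, le_max_right _ _⟩)
    refine bddIO (hρbmeas.mul hubmeas) (C := M * Mb) ?_
    intro x hx
    have hx0 : 0 ≤ x := le_trans ha hx.1.le
    have h1 : ρb x ≤ M := hM x ⟨hx0, le_trans hx.2 (le_max_left _ _)⟩
    have h2 : ub x ≤ Mb := hubMb x hx0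
    rw [Pi.mul_apply, abs_of_nonneg (mul_nonneg (hρbpos x hx0).le (hubpos x hx0).le)]
    exact mul_le_mul h1 h2 (hubpos x hx0).le hMn
  have hSII : ∀ a b : ℝ, 0 ≤ a → a ≤ b → IntervalIntegrable (fun η => ρb η * ub η) volume a b :=
    fun a b ha hab => (intervalIntegrable_iff_integrableOn_Ioc_of_le hab).mpr (hSIO a b ha)
  -- F integrand integrability
  have hFII : ∀ (c y : ℝ), 0 ≤ y → IntervalIntegrable (fun η => (t * u0 η + η - c) * ρ0 η)
      volume 0 y := by
    intro c y hy
    refine mulII (((measurable_const.mul hu0meas).add measurable_id).sub measurable_const)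
      hρ0meas hy (hRIO 0 y le_rfl) (C := t * M0 + y + |c|) ?_
    intro x hx
    have h1 : |t * u0 x| ≤ t * M0 := by
      rw [abs_mul, abs_of_nonneg ht.le]
      exact mul_le_mul_of_nonneg_left (hM0 x hx.1.le) ht.le
    have h2 : |x| ≤ y := by rw [abs_of_nonneg hx.1.le]; exact hx.2
    calc |t * u0 x + x - c| ≤ |t * u0 x| + |x| + |c| := by
          have := abs_add_le (t * u0 x + x) (-c)
          have h3 := abs_add_le (t * u0 x) x
          simp only [← sub_eq_add_neg, abs_neg] at this
          linarith
      _ ≤ t * M0 + y + |c| := by linarith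
  have hF0II : ∀ y : ℝ, 0 ≤ y → IntervalIntegrable (fun η => (t * u0 η + η) * ρ0 η)
      volume 0 y := by
    intro y hy
    have := hFII 0 y hy
    simpa using this
  -- G integrand integrability (on general subintervals of [0,∞))
  have hGII : ∀ (c a b : ℝ), 0 ≤ a → a ≤ b →
      IntervalIntegrable (fun η => (c - ub η * (t - η)) * (ρb η * ub η)) volume a b := by
    intro c a b ha hab
    refine mulII (measurable_const.sub (hubmeas.mul (measurable_const.sub measurable_id)))
      (hρbmeas.mul hubmeas) hab (hSIO a b ha) (C := |c| + Mb * (t + b)) ?_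
    intro x hx
    have hx0 : 0 ≤ x := le_trans ha hx.1.le
    have h1 : |ub x * (t - x)| ≤ Mb * (t + b) := by
      rw [abs_mul]
      refine mul_le_mul (hMb x hx0) ?_ (abs_nonneg _) hMbn
      rw [abs_sub_comm, abs_sub_le_iff]
      constructor <;> nlinarith [hx.2, hx.1, ht.le, le_trans ha hx.1.le]
    calc |c - ub x * (t - x)| ≤ |c| + |ub x * (t - x)| := abs_sub _ _
      _ ≤ |c| + Mb * (t + b) := by linarith
  -- the masses R and S
  set R : ℝ → ℝ := fun y => ∫ η in (0:ℝ)..y, ρ0 η with hR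
  set S : ℝ → ℝ := fun τ => ∫ η in (0:ℝ)..τ, ρb η * ub η with hS
  have hRnonneg : ∀ y, 0 ≤ y → 0 ≤ R y := fun y hy =>
    intervalIntegral.integral_nonneg hy (fun u hu => (hρ0pos u hu.1).le)
  have hSnonneg : ∀ τ, 0 ≤ τ → 0 ≤ S τ := fun τ hτ =>
    intervalIntegral.integral_nonneg hτ
      (fun u hu => mul_nonneg (hρbpos u hu.1).le (hubpos u hu.1).le)
  have hRmono : ∀ y₁ y₂, 0 ≤ y₁ → y₁ ≤ y₂ → R y₁ ≤ R y₂ := by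
    intro y₁ y₂ h0 h12
    have hadd := intervalIntegral.integral_add_adjacent_intervals
      (hRII 0 y₁ le_rfl h0) (hRII y₁ y₂ h0 h12)
    have hpos : 0 ≤ ∫ η in y₁..y₂, ρ0 η :=
      intervalIntegral.integral_nonneg h12 (fun u hu => (hρ0pos u (le_trans h0 hu.1)).le)
    simp only [hR]
    linarith [hadd]
  have hSmono : ∀ τ₁ τ₂, 0 ≤ τ₁ → τ₁ ≤ τ₂ → S τ₁ ≤ S τ₂ := by
    intro τ₁ τ₂ h0 h12
    have hadd := intervalIntegral.integral_add_adjacent_intervals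
      (hSII 0 τ₁ le_rfl h0) (hSII τ₁ τ₂ h0 h12)
    have hpos : 0 ≤ ∫ η in τ₁..τ₂, ρb η * ub η :=
      intervalIntegral.integral_nonneg h12 (fun u hu =>
        mul_nonneg (hρbpos u (le_trans h0 hu.1)).le (hubpos u (le_trans h0 hu.1)).le)
    simp only [hS]
    linarith [hadd]
  have hRstrict : ∀ y₁ y₂, 0 ≤ y₁ → y₁ < y₂ → R y₁ < R y₂ := by
    intro y₁ y₂ h0 h12
    have hadd := intervalIntegral.integral_add_adjacent_intervals
      (hRII 0 y₁ le_rfl h0) (hRII y₁ y₂ h0 h12.le)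
    have hpos : 0 < ∫ η in y₁..y₂, ρ0 η :=
      intervalIntegral.intervalIntegral_pos_of_pos_on (hRII y₁ y₂ h0 h12.le)
        (fun x hx => hρ0pos x (le_trans h0 hx.1.le)) h12
    simp only [hR]
    linarith [hadd]
  -- splitting formulas
  have hFsplit : ∀ y c : ℝ, 0 ≤ y →
      Fpot ρ0 u0 y c t = (∫ η in (0:ℝ)..y, (t * u0 η + η) * ρ0 η) - c * R y := by
    intro y c hy
    rw [Fpot]
    have : ∀ η : ℝ, (t * u0 η + η - c) * ρ0 η = (t * u0 η + η) * ρ0 η - c * ρ0 η :=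
      fun η => by ring
    simp_rw [this]
    rw [intervalIntegral.integral_sub (hF0II y hy) ((hRII 0 y le_rfl hy).const_mul c),
      intervalIntegral.integral_const_mul]
  have hGsplit : ∀ τ c : ℝ, 0 ≤ τ →
      Gpot ρb ub τ c t
        = c * S τ - ∫ η in (0:ℝ)..τ, (ub η * (t - η)) * (ρb η * ub η) := by
    intro τ c hτ
    rw [Gpot]
    have : ∀ η : ℝ, (c - ub η * (t - η)) * (ρb η * ub η)
        = c * (ρb η * ub η) - (ub η * (t - η)) * (ρb η * ub η) := fun η => by ring
    simp_rw [this]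
    have h2 : IntervalIntegrable (fun η => (ub η * (t - η)) * (ρb η * ub η)) volume 0 τ := by
      have h3 := (hGII 0 0 τ le_rfl hτ).neg
      have heq : (fun η => (ub η * (t - η)) * (ρb η * ub η))
          = -(fun η => (0 - ub η * (t - η)) * (ρb η * ub η)) := by
        funext η; simp only [Pi.neg_apply]; ring
      rw [heq]
      exact h3
    rw [intervalIntegral.integral_sub ((hSII 0 τ le_rfl hτ).const_mul c) h2,
      intervalIntegral.integral_const_mul]
  -- minimizers attain the min value
  have hFmys : ∀ x, 0 ≤ x → Fpot ρ0 u0 (ys x t) x t = Fm x t := by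
    intro x hx
    obtain ⟨⟨a, ha0, hae⟩, hmin⟩ := hFm x t hx ht.le
    have h1 := (hys x t hx ht.le).1
    exact le_antisymm (hae ▸ h1.2 a ha0) (hmin _ h1.1)
  have hGmτs : ∀ x, 0 ≤ x → Gpot ρb ub (τs x t) x t = Gm x t := by
    intro x hx
    obtain ⟨⟨a, ha0, hae⟩, hmin⟩ := hGm x t hx ht.le
    have h1 := (hτs x t hx ht.le).1
    exact le_antisymm (hae ▸ h1.2 a ha0) (hmin _ h1.1)
  -- monotonicity of Fm (antitone) and Gm (monotone)
  have hFmanti : ∀ x₁ x₂, 0 ≤ x₁ → x₁ ≤ x₂ → Fm x₂ t ≤ Fm x₁ t := by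
    intro x₁ x₂ hx₁ hle
    have hy0 := (hys x₁ t hx₁ ht.le).1.1
    have h1 : Fm x₂ t ≤ Fpot ρ0 u0 (ys x₁ t) x₂ t := (hFm x₂ t (le_trans hx₁ hle) ht.le).2 _ hy0
    have h2 := hFsplit (ys x₁ t) x₂ hy0
    have h3 := hFsplit (ys x₁ t) x₁ hy0
    have h4 := hFmys x₁ hx₁
    have h5 : x₁ * R (ys x₁ t) ≤ x₂ * R (ys x₁ t) :=
      mul_le_mul_of_nonneg_right hle (hRnonneg _ hy0)
    linarith
  have hGmmono : ∀ x₁ x₂, 0 ≤ x₁ → x₁ ≤ x₂ → Gm x₁ t ≤ Gm x₂ t := by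
    intro x₁ x₂ hx₁ hle
    have hτ0 := (hτs x₂ t (le_trans hx₁ hle) ht.le).1.1
    have h1 : Gm x₁ t ≤ Gpot ρb ub (τs x₂ t) x₁ t := (hGm x₁ t hx₁ ht.le).2 _ hτ0
    have h2 := hGsplit (τs x₂ t) x₁ hτ0
    have h3 := hGsplit (τs x₂ t) x₂ hτ0
    have h4 := hGmτs x₂ (le_trans hx₁ hle)
    have h5 : x₁ * S (τs x₂ t) ≤ x₂ * S (τs x₂ t) :=
      mul_le_mul_of_nonneg_right hle (hSnonneg _ hτ0)
    linarith
  -- Part 1: monotonicity of m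
  have part1 : MonotoneOn (fun x => mpot ρ0 ρb ub Fm Gm ys τs x t) (Set.Ioi 0) := by
    intro x₁ hx₁ x₂ hx₂ hle
    simp only [mem_Ioi] at hx₁ hx₂
    rcases eq_or_lt_of_le hle with rfl | hlt
    · exact le_rfl
    by_cases h1 : Fm x₁ t ≤ Gm x₁ t
    · have h2 : Fm x₂ t ≤ Gm x₂ t :=
        le_trans (hFmanti x₁ x₂ hx₁.le hle) (le_trans h1 (hGmmono x₁ x₂ hx₁.le hle))
      simp only [mpot]
      rw [if_pos (show Fm x₁ t ≤ Gm x₁ t ∧ 0 < x₁ from ⟨h1, hx₁⟩),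
        if_pos (show Fm x₂ t ≤ Gm x₂ t ∧ 0 < x₂ from ⟨h2, hx₂⟩)]
      have hy₁ := hys x₁ t hx₁.le ht.le
      have hy₂ := hys x₂ t hx₂.le ht.le
      have hymono : ys x₁ t ≤ ys x₂ t := by
        by_contra hcon
        push_neg at hcon
        -- ys x₂ t < ys x₁ t, derive contradiction
        set y₁ := ys x₁ t
        set y₂ := ys x₂ t
        have hy₂0 : 0 ≤ y₂ := hy₂.1.1
        have hy₁0 : 0 ≤ y₁ := hy₁.1.1
        have hmin2 : Fpot ρ0 u0 y₂ x₂ t ≤ Fpot ρ0 u0 y₁ x₂ t := hy₂.1.2 _ hy₁0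
        have hmin1 : Fpot ρ0 u0 y₁ x₁ t ≤ Fpot ρ0 u0 y₂ x₁ t := hy₁.1.2 _ hy₂0
        have hstrict : Fpot ρ0 u0 y₁ x₁ t < Fpot ρ0 u0 y₂ x₁ t := by
          rcases lt_or_eq_of_le hmin1 with h | h
          · exact h
          · exfalso
            have : MinimizesOn (fun y => Fpot ρ0 u0 y x₁ t) y₂ :=
              ⟨hy₂0, fun b hb => h.symm.le.trans (hy₁.1.2 b hb)⟩
            exact absurd (hy₁.2 y₂ this) (not_le.mpr hcon)
        have e1 := hFsplit y₁ x₁ hy₁0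
        have e2 := hFsplit y₁ x₂ hy₁0
        have e3 := hFsplit y₂ x₁ hy₂0
        have e4 := hFsplit y₂ x₂ hy₂0
        have hRle : R y₂ ≤ R y₁ := hRmono y₂ y₁ hy₂0 hcon.le
        have h5 : x₁ * R y₂ - x₂ * R y₂ ≥ x₁ * R y₁ - x₂ * R y₁ := by nlinarith
        linarith
      exact hRmono _ _ hy₁.1.1 hymono
    · by_cases h2 : Fm x₂ t ≤ Gm x₂ t
      · simp only [mpot]
        rw [if_neg (show ¬(Fm x₁ t ≤ Gm x₁ t ∧ 0 < x₁) from fun hc => h1 hc.1),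
          if_pos (show Fm x₂ t ≤ Gm x₂ t ∧ 0 < x₂ from ⟨h2, hx₂⟩)]
        have hτ0 := (hτs x₁ t hx₁.le ht.le).1.1
        have hy0 := (hys x₂ t hx₂.le ht.le).1.1
        have hs := hSnonneg _ hτ0
        have hr := hRnonneg _ hy0
        show -(S (τs x₁ t)) ≤ R (ys x₂ t)
        linarith
      · simp only [mpot]
        rw [if_neg (show ¬(Fm x₁ t ≤ Gm x₁ t ∧ 0 < x₁) from fun hc => h1 hc.1),
          if_neg (show ¬(Fm x₂ t ≤ Gm x₂ t ∧ 0 < x₂) from fun hc => h2 hc.1)]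
        have hτ₁ := hτs x₁ t hx₁.le ht.le
        have hτ₂ := hτs x₂ t hx₂.le ht.le
        have hτmono : τs x₂ t ≤ τs x₁ t := by
          by_contra hcon
          push_neg at hcon
          set τ₁ := τs x₁ t
          set τ₂ := τs x₂ t
          have hτ₁0 : 0 ≤ τ₁ := hτ₁.1.1
          have hτ₂0 : 0 ≤ τ₂ := hτ₂.1.1
          have hmin1 : Gpot ρb ub τ₁ x₁ t ≤ Gpot ρb ub τ₂ x₁ t := hτ₁.1.2 _ hτ₂0
          have hmin2 : Gpot ρb ub τ₂ x₂ t ≤ Gpot ρb ub τ₁ x₂ t := hτ₂.1.2 _ hτ₁0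
          have hstrict : Gpot ρb ub τ₂ x₂ t < Gpot ρb ub τ₁ x₂ t := by
            rcases lt_or_eq_of_le hmin2 with h | h
            · exact h
            · exfalso
              have : MinimizesOn (fun τ => Gpot ρb ub τ x₂ t) τ₁ :=
                ⟨hτ₁0, fun b hb => h.symm.le.trans (hτ₂.1.2 b hb)⟩
              exact absurd (hτ₂.2 τ₁ this) (not_le.mpr hcon)
          have e1 := hGsplit τ₁ x₁ hτ₁0
          have e2 := hGsplit τ₁ x₂ hτ₁0
          have e3 := hGsplit τ₂ x₁ hτ₂0
          have e4 := hGsplit τ₂ x₂ hτ₂0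
          have hSle : S τ₁ ≤ S τ₂ := hSmono τ₁ τ₂ hτ₁0 hcon.le
          have h5 : x₂ * S τ₁ - x₁ * S τ₁ ≤ x₂ * S τ₂ - x₁ * S τ₂ := by nlinarith
          linarith
        have hsm := hSmono _ _ hτ₂.1.1 hτmono
        show -(S (τs x₁ t)) ≤ -(S (τs x₂ t))
        linarith
  -- Part 2: value at zero
  have hτst : τs 0 t = t := by
    have hstrict : ∀ τ', 0 ≤ τ' → τ' ≠ t → Gpot ρb ub t 0 t < Gpot ρb ub τ' 0 t := by
      intro τ' hτ' hne
      rcases lt_or_gt_of_ne hne with hlt | hgt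
      · -- τ' < t
        have hadd := intervalIntegral.integral_add_adjacent_intervals
          (hGII 0 0 τ' le_rfl hτ') (hGII 0 τ' t hτ' hlt.le)
        have hpos : 0 < ∫ η in τ'..t, (ub η * (t - η)) * (ρb η * ub η) := by
          refine intervalIntegral.intervalIntegral_pos_of_pos_on ?_ ?_ hlt
          · refine mulII (g := fun η => ub η * (t - η)) (h := fun η => ρb η * ub η)
              (hubmeas.mul (measurable_const.sub measurable_id))
              (hρbmeas.mul hubmeas) hlt.le (hSIO τ' t hτ') (C := Mb * (t + t)) ?_
            intro x hx
            have hx0 : 0 ≤ x := le_trans hτ' hx.1.le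
            rw [abs_mul]
            refine mul_le_mul (hMb x hx0) ?_ (abs_nonneg _) hMbn
            rw [abs_sub_comm, abs_sub_le_iff]
            constructor <;> nlinarith [hx.2, hx.1, ht.le, hτ', hx0]
          · intro x hx
            have hx0 : 0 ≤ x := le_trans hτ' hx.1.le
            have h1 : 0 < ub x := hubpos x hx0
            have h2 : 0 < ρb x := hρbpos x hx0
            have h3 : 0 < t - x := by linarith [hx.2]
            positivity
        have heq : ∫ η in τ'..t, (0 - ub η * (t - η)) * (ρb η * ub η)
            = - ∫ η in τ'..t, (ub η * (t - η)) * (ρb η * ub η) := by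
          rw [← intervalIntegral.integral_neg]
          congr 1
          funext η
          ring
        simp only [Gpot] at hadd ⊢
        rw [← hadd, heq]
        linarith
      · -- t < τ'
        have hadd := intervalIntegral.integral_add_adjacent_intervals
          (hGII 0 0 t le_rfl ht.le) (hGII 0 t τ' ht.le hgt.le)
        have hpos : 0 < ∫ η in t..τ', (0 - ub η * (t - η)) * (ρb η * ub η) := by
          refine intervalIntegral.intervalIntegral_pos_of_pos_on
            (hGII 0 t τ' ht.le hgt.le) ?_ hgt
          intro x hx
          have hx0 : 0 ≤ x := le_trans ht.le hx.1.le
          have h1 : 0 < ub x := hubpos x hx0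
          have h2 : 0 < ρb x := hρbpos x hx0
          have h3 : 0 < x - t := by linarith [hx.1]
          have : (0 : ℝ) - ub x * (t - x) = ub x * (x - t) := by ring
          rw [this]
          positivity
        simp only [Gpot] at hadd ⊢
        linarith
    have hmint : MinimizesOn (fun τ => Gpot ρb ub τ 0 t) t := by
      refine ⟨ht.le, fun b hb => ?_⟩
      by_cases hbt : b = t
      · subst hbt; exact le_rfl
      · exact (hstrict b hb hbt).le
    have h1 := (hτs 0 t le_rfl ht.le).1
    by_contra hne
    have h2 := hstrict _ h1.1 hne
    have h3 := h1.2 t ht.le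
    linarith
  have part2 : mpot ρ0 ρb ub Fm Gm ys τs 0 t = -∫ η in (0:ℝ)..t, ρb η * ub η := by
    have hcond : ¬(Fm 0 t ≤ Gm 0 t ∧ (0:ℝ) < 0) := fun hc => lt_irrefl 0 hc.2
    simp only [mpot]
    rw [if_neg hcond, hτst]
  -- Part 3: limit at infinity
  -- Gm x t = 0 for x ≥ Mb * t
  have hGm0 : ∀ x, Mb * t ≤ x → Gm x t = 0 := by
    intro x hx
    have hx0 : 0 ≤ x := le_trans (mul_nonneg hMbn ht.le) hx
    have hle0 : Gm x t ≤ 0 := by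
      have := (hGm x t hx0 ht.le).2 0 le_rfl
      simpa [Gpot, intervalIntegral.integral_same] using this
    have hge0 : 0 ≤ Gm x t := by
      obtain ⟨a, ha0, hae⟩ := (hGm x t hx0 ht.le).1
      rw [← hae]
      refine intervalIntegral.integral_nonneg ha0 (fun u hu => ?_)
      have hu0 : 0 ≤ u := hu.1
      have h1 : ub u * (t - u) ≤ ub u * t :=
        mul_le_mul_of_nonneg_left (by linarith) (hubpos u hu0).le
      have h2 : ub u * t ≤ Mb * t := mul_le_mul_of_nonneg_right (hubMb u hu0) ht.le
      have h3 : 0 ≤ x - ub u * (t - u) := by linarith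
      exact mul_nonneg h3 (mul_nonneg (hρbpos u hu0).le (hubpos u hu0).le)
    linarith
  -- Fm x t < 0 for x large
  have hR1pos : 0 < R 1 := by
    have := hRstrict 0 1 le_rfl one_pos
    simpa [hR, intervalIntegral.integral_same] using this
  set A : ℝ := ∫ η in (0:ℝ)..1, (t * u0 η + η) * ρ0 η with hA
  have hFmle : ∀ x, 0 ≤ x → Fm x t ≤ A - x * R 1 := by
    intro x hx
    have h1 : Fm x t ≤ Fpot ρ0 u0 1 x t := (hFm x t hx ht.le).2 1 zero_le_one
    have h2 := hFsplit 1 x zero_le_one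
    linarith
  -- eventually the F-branch holds
  have hbranch : ∀ᶠ x in atTop, Fm x t ≤ Gm x t ∧ 0 < x := by
    filter_upwards [eventually_gt_atTop (0:ℝ), eventually_ge_atTop (Mb * t),
      eventually_gt_atTop (A / R 1)] with x h0 h1 h2
    refine ⟨?_, h0⟩
    rw [hGm0 x h1]
    have h3 := hFmle x h0.le
    have h4 : A < x * R 1 := (div_lt_iff₀ hR1pos).mp h2
    linarith
  -- ys x t → ∞
  have hysatTop : Tendsto (fun x => ys x t) atTop atTop := by
    rw [tendsto_atTop]
    intro Y
    set Y' := max Y 0 with hY'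
    have hY'0 : 0 ≤ Y' := le_max_right _ _
    set K : ℝ := t * M0 + (Y' + 1) with hK
    have hKn : 0 ≤ K := by positivity
    have hδ : 0 < R (Y' + 1) - R Y' := by
      have := hRstrict Y' (Y' + 1) hY'0 (by linarith)
      linarith
    have hbound : ∀ y, 0 ≤ y → y ≤ Y' + 1 →
        |∫ η in (0:ℝ)..y, (t * u0 η + η) * ρ0 η| ≤ K * R (Y' + 1) := by
      intro y hy hyY
      have hup : (∫ η in (0:ℝ)..y, (t * u0 η + η) * ρ0 η) ≤ K * R y := by
        have := intervalIntegral.integral_mono_on hy (hF0II y hy)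
          ((hRII 0 y le_rfl hy).const_mul K) (fun u hu => ?_)
        · rw [intervalIntegral.integral_const_mul] at this
          exact this
        · have h1 : t * u0 u + u ≤ K := by
            have h2 : |u0 u| ≤ M0 := hM0 u hu.1
            have h3 : t * u0 u ≤ t * M0 :=
              mul_le_mul_of_nonneg_left (le_trans (le_abs_self _) h2) ht.le
            have h4 : u ≤ Y' + 1 := le_trans hu.2 hyY
            simp only [hK]; linarith
          exact mul_le_mul_of_nonneg_right h1 (hρ0pos u hu.1).le
      have hlo : -(K * R y) ≤ ∫ η in (0:ℝ)..y, (t * u0 η + η) * ρ0 η := by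
        have := intervalIntegral.integral_mono_on hy
          ((hRII 0 y le_rfl hy).const_mul (-K)) (hF0II y hy) (fun u hu => ?_)
        · rw [intervalIntegral.integral_const_mul] at this
          linarith [this]
        · have h1 : -K ≤ t * u0 u + u := by
            have h2 : |u0 u| ≤ M0 := hM0 u hu.1
            have h3 : -(t * M0) ≤ t * u0 u := by
              have := mul_le_mul_of_nonneg_left (neg_abs_le (u0 u)) ht.le
              have h4 : t * -|u0 u| = -(t * |u0 u|) := by ring
              have h5 : t * |u0 u| ≤ t * M0 := mul_le_mul_of_nonneg_left h2 ht.le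
              nlinarith [abs_nonneg (u0 u)]
            simp only [hK]; linarith [hu.1]
          exact mul_le_mul_of_nonneg_right h1 (hρ0pos u hu.1).le
      have hRle : K * R y ≤ K * R (Y' + 1) :=
        mul_le_mul_of_nonneg_left (hRmono y (Y' + 1) hy hyY) hKn
      rw [abs_le]
      constructor <;> linarith
    set X : ℝ := max 0 ((2 * K * R (Y' + 1) + 1) / (R (Y' + 1) - R Y')) with hX
    filter_upwards [eventually_ge_atTop X] with x hxX
    have hx0 : 0 ≤ x := le_trans (le_max_left _ _) hxX
    by_contra hcon
    push_neg at hcon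
    -- ys x t < Y ≤ max Y 0 = Y'
    have hyle : ys x t ≤ Y' := le_trans hcon.le (le_max_left _ _)
    have hy0 : 0 ≤ ys x t := (hys x t hx0 ht.le).1.1
    have hminle : Fpot ρ0 u0 (ys x t) x t ≤ Fpot ρ0 u0 (Y' + 1) x t :=
      (hys x t hx0 ht.le).1.2 (Y' + 1) (by linarith)
    have e1 := hFsplit (ys x t) x hy0
    have e2 := hFsplit (Y' + 1) x (by linarith)
    have b1 := hbound (ys x t) hy0 (by linarith)
    have b2 := hbound (Y' + 1) (by linarith) le_rfl
    have hRdiff : R Y' - R (ys x t) ≥ 0 :=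
      sub_nonneg.mpr (hRmono (ys x t) Y' hy0 hyle)
    have hxbig : (2 * K * R (Y' + 1) + 1) / (R (Y' + 1) - R Y') ≤ x :=
      le_trans (le_max_right _ _) hxX
    have hxbig2 : 2 * K * R (Y' + 1) + 1 ≤ x * (R (Y' + 1) - R Y') :=
      (div_le_iff₀ hδ).mp hxbig
    have hxR : x * (R (Y' + 1) - R Y') ≤ x * (R (Y' + 1) - R (ys x t)) :=
      mul_le_mul_of_nonneg_left (by linarith) hx0
    rw [abs_le] at b1 b2
    -- F(ys) - F(Y'+1) ≥ -2K R(Y'+1) + x (R(Y'+1) - R(ys)) > 0, contradiction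
    linarith [b1.1, b1.2, b2.1, b2.2, hminle, e1, e2, hxR, hxbig2]
  -- final limit
  have hIoi : IntegrableOn ρ0 (Ioi 0) := hρ0int.mono_set Ioi_subset_Ici_self
  have hlim : Tendsto (fun x => ∫ η in (0:ℝ)..ys x t, ρ0 η) atTop
      (nhds (∫ x in Ioi (0:ℝ), ρ0 x)) :=
    MeasureTheory.intervalIntegral_tendsto_integral_Ioi 0 hIoi hysatTop
  have part3 : Filter.Tendsto
      (fun x => mpot ρ0 ρb ub Fm Gm ys τs x t - mpot ρ0 ρb ub Fm Gm ys τs 0 t)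
      Filter.atTop
      (nhds ((∫ x in Set.Ioi (0:ℝ), ρ0 x) + ∫ η in (0:ℝ)..t, ρb η * ub η)) := by
    have h1 := hlim.add_const (∫ η in (0:ℝ)..t, ρb η * ub η)
    refine h1.congr' ?_
    filter_upwards [hbranch] with x hx
    show (∫ η in (0:ℝ)..ys x t, ρ0 η) + (∫ η in (0:ℝ)..t, ρb η * ub η)
      = mpot ρ0 ρb ub Fm Gm ys τs x t - mpot ρ0 ρb ub Fm Gm ys τs 0 t
    rw [part2]
    simp only [mpot]
    rw [if_pos hx]
    ring
  exact ⟨part1, part2, part3⟩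
end
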